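/- arXiv:2006.13705 — 3 statements merged into one kernel-verified Lean document; each statement's English description precedes it below -/
import Mathlib

section
/- Let X : ℕ → Set_* be a tower of pointed sets (a diagram over the directed poset ℕ) and let 0 → A → B → C → 0 be a short exact sequence of abelian groups. Then the induced sequences 0 → G(X,A) → G(X,B) → G(X,C) and 0 → H(X,A) → H(X,B) → H(X,C) are exact. If moreover X satisfies the Mittag-Leffler condition, then 0 → G(X,A) → G(X,B) → G(X,C) → 0 and 0 → H(X,A) → H(X,B) → H(X,C) → 0 are exact. -/
open CategoryTheory Finsupp

universe u v w

/-- The smash product `Y ∧ A` of a pointed set `(Y, y0)` with an abelian group `A`: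
the group of finitely supported functions `Y →₀ A` vanishing at the basepoint,
i.e. `⊕_{y ∈ Y∖{y0}} A`. -/
def Smash (Y : Type u) (y0 : Y) (A : Type v) [AddCommGroup A] :
    AddSubgroup (Y →₀ A) where
  carrier := {f | f y0 = 0}
  add_mem' := by
    intro a b ha hb
    simp only [Set.mem_setOf_eq, Finsupp.add_apply] at *
    rw [ha, hb, add_zero]
  zero_mem' := by simp
  neg_mem' := by
    intro a ha
    simp only [Set.mem_setOf_eq, Finsupp.neg_apply] at *
    rw [ha, neg_zero]

theorem mem_smash {Y : Type u} {y0 : Y} {A : Type v} [AddCommGroup A] {f : Y →₀ A} :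
    f ∈ Smash Y y0 A ↔ f y0 = 0 := Iff.rfl

/-- The pushforward homomorphism `g_* : Y∧A → Z∧A` induced by a (pointed) map
`g : Y → Z`: `(g_* f)(z) = ∑_{y : g y = z} f y` for `z ≠ z0`, and `(g_* f)(z0) = 0`. -/
noncomputable def smashMap {Y : Type u} {Z : Type v} (y0 : Y) (z0 : Z) (g : Y → Z)
    (A : Type w) [AddCommGroup A] :
    Smash Y y0 A →+ Smash Z z0 A where
  toFun f := ⟨(Finsupp.mapDomain g f.1).erase z0, Finsupp.erase_same⟩
  map_zero' := by
    apply Subtype.ext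
    simp
  map_add' f₁ f₂ := by
    apply Subtype.ext
    show (Finsupp.mapDomain g ((f₁ : Y →₀ A) + (f₂ : Y →₀ A))).erase z0 = _
    rw [Finsupp.mapDomain_add, Finsupp.erase_add]
    rfl

theorem smashMap_comp {Y : Type u} {Z : Type v} {W : Type w} (y0 : Y) (z0 : Z) (w0 : W)
    (g : Y → Z) (g' : Z → W) (hg' : g' z0 = w0)
    (A : Type*) [AddCommGroup A] (f : Smash Y y0 A) :
    smashMap z0 w0 g' A (smashMap y0 z0 g A f) = smashMap y0 w0 (g' ∘ g) A f := by
  classical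
  apply Subtype.ext
  show (Finsupp.mapDomain g' ((Finsupp.mapDomain g f.1).erase z0)).erase w0
      = (Finsupp.mapDomain (g' ∘ g) f.1).erase w0
  rw [Finsupp.mapDomain_comp]
  set h := Finsupp.mapDomain g f.1 with hh
  have key : Finsupp.mapDomain g' (h.erase z0)
      = Finsupp.mapDomain g' h - Finsupp.single w0 (h z0) := by
    have h1 : h.erase z0 = h - Finsupp.single z0 (h z0) := by
      ext a
      by_cases ha : a = z0
      · subst ha; simp
      · simp [Finsupp.erase_ne ha, Finsupp.single_apply, Ne.symm ha, ha]
    rw [h1]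
    have h2 := map_sub (Finsupp.mapDomain.addMonoidHom g') h (Finsupp.single z0 (h z0))
    simp only [Finsupp.mapDomain.addMonoidHom_apply] at h2
    rw [h2, Finsupp.mapDomain_single, hg']
  rw [key]
  ext a
  by_cases ha : a = w0
  · subst ha; simp
  · simp [Finsupp.erase_ne ha, Finsupp.single_apply, Ne.symm ha, ha]
/-- The inverse limit of a diagram of pointed sets, as a subset of the product. -/
def plim {D : Type u} [Category.{v} D] (F : D ⥤ Pointed.{w}) :
    Set (∀ d : D, (F.obj d).X) :=
  {x | ∀ ⦃d d' : D⦄ (u : d ⟶ d'), (F.map u).toFun (x d) = x d'}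

/-- The basepoint of the inverse limit of a diagram of pointed sets. -/
def plimPt {D : Type u} [Category.{v} D] (F : D ⥤ Pointed.{w}) : plim F :=
  ⟨fun d => (F.obj d).point, fun _ _ u => (F.map u).map_point⟩

/-- The inverse limit `lim_D (X ∧ A)` of the diagram of abelian groups obtained by
smashing a diagram of pointed sets with an abelian group `A`. -/
noncomputable def glim {D : Type u} [Category.{v} D] (F : D ⥤ Pointed.{w})
    (A : Type*) [AddCommGroup A] :
    AddSubgroup (∀ d : D, Smash (F.obj d).X (F.obj d).point A) where
  carrier := {h | ∀ ⦃d d' : D⦄ (u : d ⟶ d'),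
      smashMap (F.obj d).point (F.obj d').point (F.map u).toFun A (h d) = h d'}
  add_mem' := by
    intro a b ha hb d d' u
    rw [Pi.add_apply, map_add, ha u, hb u]
    rfl
  zero_mem' := by
    intro d d' u
    rw [Pi.zero_apply, map_zero]
    rfl
  neg_mem' := by
    intro a ha d d' u
    rw [Pi.neg_apply, map_neg, ha u]
    rfl

/-- The natural map `ρ : (lim_D X) ∧ A → lim_D (X ∧ A)`, whose component at `d`
is induced by the projection `lim_D X → X d`. -/
noncomputable def rho {D : Type u} [Category.{v} D] (F : D ⥤ Pointed.{w})
    (A : Type*) [AddCommGroup A] :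
    Smash (plim F) (plimPt F) A →+ glim F A where
  toFun f := ⟨fun d => smashMap (plimPt F) (F.obj d).point (fun x => x.1 d) A f, by
    intro d d' u
    rw [smashMap_comp (plimPt F) (F.obj d).point (F.obj d').point _ _ (F.map u).map_point A f]
    have : ((F.map u).toFun ∘ fun x : plim F => x.1 d) = fun x : plim F => x.1 d' := by
      funext x
      exact x.2 u
    rw [this]⟩
  map_zero' := by
    apply Subtype.ext
    funext d
    show smashMap (plimPt F) (F.obj d).point (fun x => x.1 d) A 0 = (0 : Smash _ _ A)
    exact map_zero _
  map_add' f₁ f₂ := by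
    apply Subtype.ext
    funext d
    show smashMap (plimPt F) (F.obj d).point (fun x => x.1 d) A (f₁ + f₂)
        = smashMap (plimPt F) (F.obj d).point (fun x => x.1 d) A f₁
          + smashMap (plimPt F) (F.obj d).point (fun x => x.1 d) A f₂
    exact map_add _ f₁ f₂
/-- The homomorphism `Y ∧ α : Y∧A → Y∧B` induced by a group homomorphism `α : A →+ B`
(postcomposition with `α`). -/
noncomputable def smashRange {Y : Type u} (y0 : Y) {A : Type v} {B : Type w}
    [AddCommGroup A] [AddCommGroup B] (α : A →+ B) :
    Smash Y y0 A →+ Smash Y y0 B where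
  toFun f := ⟨Finsupp.mapRange α α.map_zero f.1, by
    rw [mem_smash, Finsupp.mapRange_apply, mem_smash.mp f.2, α.map_zero]⟩
  map_zero' := by
    apply Subtype.ext
    show Finsupp.mapRange α α.map_zero ((0 : Smash Y y0 A) : Y →₀ A) = 0
    simp
  map_add' f₁ f₂ := by
    apply Subtype.ext
    show Finsupp.mapRange α α.map_zero ((f₁ : Y →₀ A) + (f₂ : Y →₀ A)) = _
    rw [Finsupp.mapRange_add α.map_add]
    rfl

theorem smashMap_smashRange {Y : Type u} {Z : Type v} (y0 : Y) (z0 : Z) (g : Y → Z)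
    {A B : Type*} [AddCommGroup A] [AddCommGroup B] (α : A →+ B) (f : Smash Y y0 A) :
    smashMap y0 z0 g B (smashRange y0 α f) = smashRange z0 α (smashMap y0 z0 g A f) := by
  classical
  apply Subtype.ext
  show (Finsupp.mapDomain g (Finsupp.mapRange α α.map_zero f.1)).erase z0
      = Finsupp.mapRange α α.map_zero ((Finsupp.mapDomain g f.1).erase z0)
  rw [Finsupp.mapDomain_mapRange g f.1 α α.map_zero α.map_add]
  ext a
  by_cases ha : a = z0
  · subst ha
    simp [Finsupp.mapRange_apply]
  · simp [Finsupp.erase_ne ha, Finsupp.mapRange_apply]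

/-- The induced homomorphism `G(X, α) : lim_D (X∧A) → lim_D (X∧B)` for `α : A →+ B`. -/
noncomputable def glimMap {D : Type u} [Category.{v} D] (F : D ⥤ Pointed.{w})
    {A B : Type*} [AddCommGroup A] [AddCommGroup B] (α : A →+ B) :
    glim F A →+ glim F B where
  toFun h := ⟨fun d => smashRange (F.obj d).point α (h.1 d), by
    intro d d' u
    rw [smashMap_smashRange, h.2 u]⟩
  map_zero' := by
    apply Subtype.ext
    funext d
    show smashRange (F.obj d).point α ((0 : glim F A).1 d) = (0 : Smash _ _ B)
    rw [show ((0 : glim F A).1 d) = 0 from rfl, map_zero]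
  map_add' h₁ h₂ := by
    apply Subtype.ext
    funext d
    show smashRange (F.obj d).point α ((h₁ + h₂).1 d)
        = smashRange (F.obj d).point α (h₁.1 d) + smashRange (F.obj d).point α (h₂.1 d)
    rw [show ((h₁ + h₂ : glim F A).1 d) = h₁.1 d + h₂.1 d from rfl, map_add]

theorem glimMap_rho {D : Type u} [Category.{v} D] (F : D ⥤ Pointed.{w})
    {A B : Type*} [AddCommGroup A] [AddCommGroup B] (α : A →+ B)
    (f : Smash (plim F) (plimPt F) A) :
    glimMap F α (rho F A f) = rho F B (smashRange (plimPt F) α f) := by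
  apply Subtype.ext
  funext d
  show smashRange (F.obj d).point α (smashMap (plimPt F) (F.obj d).point (fun x => x.1 d) A f)
      = smashMap (plimPt F) (F.obj d).point (fun x => x.1 d) B (smashRange (plimPt F) α f)
  rw [smashMap_smashRange]

/-- The induced homomorphism `H(X, α) : H(X,A) → H(X,B)` on the cokernels of the
natural maps `ρ`, for `α : A →+ B`. -/
noncomputable def Hmap {D : Type u} [Category.{v} D] (F : D ⥤ Pointed.{w})
    {A B : Type*} [AddCommGroup A] [AddCommGroup B] (α : A →+ B) :
    (↥(glim F A) ⧸ (rho F A).range) →+ (↥(glim F B) ⧸ (rho F B).range) :=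
  QuotientAddGroup.map _ _ (glimMap F α) (by
    rintro x ⟨f, rfl⟩
    exact ⟨smashRange (plimPt F) α f, (glimMap_rho F α f).symm⟩)

/-- The Mittag-Leffler condition for a diagram of pointed sets indexed by a
preordered set `T` (with structure maps `X(s) → X(t)` for `t ≤ s`): for every `t`
there is `s ≥ t` such that for every `r ≥ s` the images of `X(s)` and of `X(r)`
in `X(t)` coincide. -/
def MittagLeffler {T : Type u} [Preorder T] (F : Tᵒᵖ ⥤ Pointed.{w}) : Prop :=
  ∀ t : T, ∃ s : T, ∃ hts : t ≤ s, ∀ r : T, ∀ hsr : s ≤ r,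
    Set.range (F.map (homOfLE hts).op).toFun
      = Set.range (F.map (homOfLE (hts.trans hsr)).op).toFun
/-! ### Auxiliary lemmas -/

section SmashAux

variable {Y : Type u} {Z : Type*} {A : Type v} {B : Type*} {C : Type*}
  [AddCommGroup A] [AddCommGroup B] [AddCommGroup C]

theorem smashMap_coe (y0 : Y) (z0 : Z) (g : Y → Z) (f : Smash Y y0 A) :
    ((smashMap y0 z0 g A f : Smash Z z0 A) : Z →₀ A)
      = (Finsupp.mapDomain g (f : Y →₀ A)).erase z0 := rfl

theorem smashRange_coe (y0 : Y) (α : A →+ B) (f : Smash Y y0 A) :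
    ((smashRange y0 α f : Smash Y y0 B) : Y →₀ B)
      = Finsupp.mapRange α α.map_zero (f : Y →₀ A) := rfl

theorem smashRange_apply (y0 : Y) (α : A →+ B) (f : Smash Y y0 A) (y : Y) :
    ((smashRange y0 α f : Smash Y y0 B) : Y →₀ B) y = α ((f : Y →₀ A) y) := by
  rw [smashRange_coe, Finsupp.mapRange_apply]

theorem smashRange_injective (y0 : Y) {α : A →+ B} (hα : Function.Injective α) :
    Function.Injective ⇑(smashRange y0 α : Smash Y y0 A →+ Smash Y y0 B) := by
  intro f g h
  apply Subtype.ext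
  exact Finsupp.mapRange_injective (⇑α) α.map_zero hα (congrArg Subtype.val h)

theorem smashMap_id (y0 : Y) (f : Smash Y y0 A) :
    smashMap y0 y0 id A f = f := by
  apply Subtype.ext
  rw [smashMap_coe, Finsupp.mapDomain_id]
  ext z
  by_cases hz : z = y0
  · subst hz; rw [Finsupp.erase_same, (mem_smash.mp f.2).symm]
  · rw [Finsupp.erase_ne hz]

/-- Pull back along an injective `α` a finsupp all of whose values are in the range. -/
theorem exists_smashRange_eq (y0 : Y) {α : A →+ B} (hα : Function.Injective α)
    (f : Smash Y y0 B) (hf : ∀ y, (f : Y →₀ B) y ∈ Set.range ⇑α) :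
    ∃ g : Smash Y y0 A, smashRange y0 α g = f := by
  classical
  set ainv : B → A := fun b => if h : b ∈ Set.range ⇑α then h.choose else 0 with hainv
  have hinv : ∀ b ∈ Set.range ⇑α, α (ainv b) = b := by
    intro b hb
    simp only [hainv, dif_pos hb]
    exact hb.choose_spec
  have h0 : ainv 0 = 0 := by
    have hr : (0 : B) ∈ Set.range ⇑α := ⟨0, map_zero α⟩
    apply hα
    rw [hinv 0 hr, map_zero]
  refine ⟨⟨Finsupp.mapRange ainv h0 (f : Y →₀ B), ?_⟩, ?_⟩
  · rw [mem_smash, Finsupp.mapRange_apply, mem_smash.mp f.2, h0]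
  · apply Subtype.ext
    show Finsupp.mapRange (⇑α) α.map_zero (Finsupp.mapRange ainv h0 (f : Y →₀ B)) = _
    ext y
    rw [Finsupp.mapRange_apply, Finsupp.mapRange_apply, hinv _ (hf y)]

/-- Levelwise surjectivity of `Y ∧ β` for surjective `β`. -/
theorem smashRange_surjective (y0 : Y) {β : B →+ C} (hβ : Function.Surjective β) :
    Function.Surjective ⇑(smashRange y0 β : Smash Y y0 B →+ Smash Y y0 C) := by
  classical
  set t : C → B := fun c => if c = 0 then 0 else (hβ c).choose with ht
  have htc : ∀ c, β (t c) = c := by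
    intro c
    by_cases hc : c = 0
    · simp [ht, hc]
    · simp only [ht, if_neg hc]
      exact (hβ c).choose_spec
  have h0 : t 0 = 0 := by simp [ht]
  intro f
  refine ⟨⟨Finsupp.mapRange t h0 (f : Y →₀ C), ?_⟩, ?_⟩
  · rw [mem_smash, Finsupp.mapRange_apply, mem_smash.mp f.2, h0]
  · apply Subtype.ext
    show Finsupp.mapRange (⇑β) β.map_zero (Finsupp.mapRange t h0 (f : Y →₀ C)) = _
    ext y
    rw [Finsupp.mapRange_apply, Finsupp.mapRange_apply, htc]

theorem smashRange_smashRange_eq_zero (y0 : Y) {α : A →+ B} {β : B →+ C}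
    (hαβ : Function.Exact α β) (f : Smash Y y0 A) :
    smashRange y0 β (smashRange y0 α f) = 0 := by
  apply Subtype.ext
  ext y
  rw [smashRange_apply, smashRange_apply, hαβ.apply_apply_eq_zero]
  rfl

theorem smashMap_support_subset (y0 : Y) (z0 : Z) (g : Y → Z) (f : Smash Y y0 A) :
    (((smashMap y0 z0 g A f : Smash Z z0 A) : Z →₀ A).support : Set Z) ⊆ Set.range g := by
  classical
  intro z hz
  rw [smashMap_coe] at hz
  have hz1 : z ∈ ((Finsupp.mapDomain g (f : Y →₀ A)).support : Finset Z) := by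
    have := Finsupp.support_erase (a := z0) (f := Finsupp.mapDomain g (f : Y →₀ A))
    rw [this] at hz
    exact Finset.mem_of_mem_erase hz
  obtain ⟨y, _, rfl⟩ := Finset.mem_image.1 (Finsupp.mapDomain_support hz1)
  exact Set.mem_range_self y

/-- A finsupp supported in the range of a pointed map `g` is a pushforward. -/
theorem exists_smashMap_eq (y0 : Y) (z0 : Z) (g : Y → Z) (hg : g y0 = z0)
    (k : Smash Z z0 A) (hk : (((k : Smash Z z0 A) : Z →₀ A).support : Set Z) ⊆ Set.range g) :
    ∃ f : Smash Y y0 A, smashMap y0 z0 g A f = k := by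
  classical
  set σ : Z → Y := fun z => if h : z ∈ Set.range g then h.choose else y0 with hσdef
  have hσ : ∀ z ∈ Set.range g, g (σ z) = z := by
    intro z h
    simp only [hσdef, dif_pos h]
    exact h.choose_spec
  refine ⟨⟨Finsupp.mapDomain σ (k : Z →₀ A), ?_⟩, ?_⟩
  · rw [mem_smash]
    by_contra h
    have hmem : y0 ∈ (Finsupp.mapDomain σ (k : Z →₀ A)).support :=
      Finsupp.mem_support_iff.2 h
    obtain ⟨z, hz, hzy⟩ := Finset.mem_image.1 (Finsupp.mapDomain_support hmem)
    have hzr : z ∈ Set.range g := hk (Finset.mem_coe.2 hz)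
    have hz0 : z = z0 := by rw [← hσ z hzr, hzy, hg]
    exact (Finsupp.mem_support_iff.1 hz) (by rw [hz0]; exact mem_smash.mp k.2)
  · apply Subtype.ext
    rw [smashMap_coe]
    show (Finsupp.mapDomain g (Finsupp.mapDomain σ (k : Z →₀ A))).erase z0 = _
    rw [← Finsupp.mapDomain_comp]
    have hgid : Finsupp.mapDomain (g ∘ σ) (k : Z →₀ A)
        = Finsupp.mapDomain id (k : Z →₀ A) :=
      Finsupp.mapDomain_congr fun z hz => hσ z (hk (Finset.mem_coe.2 hz))
    rw [hgid, Finsupp.mapDomain_id]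
    ext z
    by_cases hz : z = z0
    · subst hz; rw [Finsupp.erase_same, mem_smash.mp k.2]
    · rw [Finsupp.erase_ne hz]

end SmashAux

section TowerAux

open Opposite

variable (F : ℕᵒᵖ ⥤ Pointed.{w})

/-- The transition map `X n → X m` of the tower, for `m ≤ n`. -/
noncomputable def tr {m n : ℕ} (h : m ≤ n) :
    (F.obj (op n)).X → (F.obj (op m)).X :=
  (F.map (homOfLE h).op).toFun

theorem tr_point {m n : ℕ} (h : m ≤ n) :
    tr F h (F.obj (op n)).point = (F.obj (op m)).point :=
  (F.map (homOfLE h).op).map_point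

theorem tr_tr {m k n : ℕ} (h1 : m ≤ k) (h2 : k ≤ n) (x : (F.obj (op n)).X) :
    tr F h1 (tr F h2 x) = tr F (h1.trans h2) x := by
  have hcomp : (homOfLE (h1.trans h2)).op = (homOfLE h2).op ≫ (homOfLE h1).op := rfl
  show _ = (F.map (homOfLE (h1.trans h2)).op).toFun x
  rw [hcomp, F.map_comp]
  rfl

/-- The induced transition map `X n ∧ A → X m ∧ A` of the smashed tower. -/
noncomputable def trS (A : Type v) [AddCommGroup A] {m n : ℕ} (h : m ≤ n) :
    Smash (F.obj (op n)).X (F.obj (op n)).point A →+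
      Smash (F.obj (op m)).X (F.obj (op m)).point A :=
  smashMap _ _ (tr F h) A

theorem trS_trS {A : Type v} [AddCommGroup A] {m k n : ℕ} (h1 : m ≤ k) (h2 : k ≤ n)
    (f : Smash (F.obj (op n)).X (F.obj (op n)).point A) :
    trS F A h1 (trS F A h2 f) = trS F A (h1.trans h2) f := by
  show smashMap _ _ (tr F h1) A (smashMap _ _ (tr F h2) A f) = smashMap _ _ (tr F (h1.trans h2)) A f
  rw [smashMap_comp _ _ _ _ _ (tr_point F h1) A f]
  have : tr F h1 ∘ tr F h2 = tr F (h1.trans h2) := funext fun x => tr_tr F h1 h2 x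
  rw [this]

theorem trS_refl {A : Type v} [AddCommGroup A] (n : ℕ)
    (f : Smash (F.obj (op n)).X (F.obj (op n)).point A) :
    trS F A (le_refl n) f = f := by
  have h1 : (homOfLE (le_refl n)).op = 𝟙 (op n) := rfl
  show smashMap _ _ (F.map (homOfLE (le_refl n)).op).toFun A f = f
  rw [h1, F.map_id]
  exact smashMap_id _ f

theorem trS_smashRange {A : Type v} {B : Type v} [AddCommGroup A] [AddCommGroup B]
    (α : A →+ B) {m n : ℕ} (h : m ≤ n)
    (f : Smash (F.obj (op n)).X (F.obj (op n)).point A) :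
    trS F B h (smashRange _ α f) = smashRange _ α (trS F A h f) :=
  smashMap_smashRange _ _ (tr F h) α f

theorem trS_support_subset {A : Type v} [AddCommGroup A] {m n : ℕ} (h : m ≤ n)
    (f : Smash (F.obj (op n)).X (F.obj (op n)).point A) :
    (((trS F A h f : Smash (F.obj (op m)).X (F.obj (op m)).point A) :
      (F.obj (op m)).X →₀ A).support : Set (F.obj (op m)).X) ⊆ Set.range (tr F h) :=
  smashMap_support_subset _ _ (tr F h) f

theorem exists_trS_eq {A : Type v} [AddCommGroup A] {m n : ℕ} (h : m ≤ n)
    (k : Smash (F.obj (op m)).X (F.obj (op m)).point A)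
    (hk : (((k : Smash (F.obj (op m)).X (F.obj (op m)).point A) :
      (F.obj (op m)).X →₀ A).support : Set (F.obj (op m)).X) ⊆ Set.range (tr F h)) :
    ∃ f : Smash (F.obj (op n)).X (F.obj (op n)).point A, trS F A h f = k :=
  exists_smashMap_eq _ _ (tr F h) (tr_point F h) k hk

theorem glim_compat {A : Type v} [AddCommGroup A] (h : glim F A) {m n : ℕ} (hmn : m ≤ n) :
    trS F A hmn (h.1 (op n)) = h.1 (op m) :=
  h.2 (homOfLE hmn).op

theorem mem_glim_of_step {A : Type v} [AddCommGroup A]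
    (h : ∀ d : ℕᵒᵖ, Smash (F.obj d).X (F.obj d).point A)
    (hstep : ∀ n : ℕ, trS F A (Nat.le_succ n) (h (op (n + 1))) = h (op n)) :
    h ∈ glim F A := by
  have key : ∀ n m (hmn : m ≤ n), trS F A hmn (h (op n)) = h (op m) := by
    intro n
    induction n with
    | zero =>
      intro m hmn
      have hm0 : m = 0 := Nat.le_zero.1 hmn
      subst hm0
      exact trS_refl F 0 _
    | succ n ih =>
      intro m hmn
      rcases Nat.lt_or_ge m (n + 1) with h1 | h2
      · have hm : m ≤ n := Nat.lt_succ_iff.mp h1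
        have e1 : trS F A hmn (h (op (n + 1)))
            = trS F A hm (trS F A (Nat.le_succ n) (h (op (n + 1)))) :=
          (trS_trS F hm (Nat.le_succ n) _).symm
        rw [e1, hstep n]
        exact ih m hm
      · have hm : m = n + 1 := le_antisymm hmn h2
        subst hm
        exact trS_refl F (n + 1) _
  intro d d' u
  have hmn : d'.unop ≤ d.unop := leOfHom u.unop
  have hu : u = (homOfLE hmn).op := by
    apply Quiver.Hom.unop_inj
    apply Subsingleton.elim
  subst hu
  exact key d.unop d'.unop hmn

end TowerAux

section PlimAux

open Opposite

variable (F : ℕᵒᵖ ⥤ Pointed.{w})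

theorem plim_sep (x y : plim F) (hxy : x ≠ y) :
    ∃ n : ℕ, x.1 (op n) ≠ y.1 (op n) := by
  by_contra hc
  push_neg at hc
  apply hxy
  apply Subtype.ext
  funext d
  exact hc d.unop

theorem plim_coord_mono (x y : plim F) {m n : ℕ} (hmn : m ≤ n)
    (hne : x.1 (op m) ≠ y.1 (op m)) : x.1 (op n) ≠ y.1 (op n) := by
  intro he
  apply hne
  rw [← x.2 (homOfLE hmn).op, ← y.2 (homOfLE hmn).op, he]

/-- If `glimMap F α x` is in the image of `ρ`, witnessed by `f`, then all values of `f`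
lie in the range of the injective map `α`, so `f` pulls back along `α`. -/
theorem exists_pullback_of_rho {A B : Type v} [AddCommGroup A] [AddCommGroup B]
    {α : A →+ B} (hα : Function.Injective ⇑α)
    (x : glim F A) (f : Smash (plim F) (plimPt F) B)
    (hx : glimMap F α x = rho F B f) :
    ∃ g : Smash (plim F) (plimPt F) A, smashRange (plimPt F) α g = f := by
  classical
  apply exists_smashRange_eq (plimPt F) hα f
  intro y
  by_cases hy0 : (f : plim F →₀ B) y = 0
  · exact ⟨0, by rw [map_zero, hy0]⟩
  have hypt : y ≠ plimPt F := by
    intro he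
    apply hy0
    rw [he]
    exact mem_smash.mp f.2
  set s : Finset (plim F) := insert y (f : plim F →₀ B).support with hs
  set pfun : plim F × plim F → ℕ := fun p =>
    if h : p.1 ≠ p.2 then (plim_sep F p.1 p.2 h).choose else 0 with hpfun
  set n0 : ℕ := (plim_sep F y (plimPt F) hypt).choose with hn0
  set N : ℕ := max ((s ×ˢ s).sup pfun) n0 with hN
  have hsep : ∀ z1 ∈ s, ∀ z2 ∈ s, z1.1 (op N) = z2.1 (op N) → z1 = z2 := by
    intro z1 h1 z2 h2 he
    by_contra hne
    have hp : (z1, z2) ∈ s ×ˢ s := Finset.mem_product.2 ⟨h1, h2⟩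
    have hle : pfun (z1, z2) ≤ N := le_trans (Finset.le_sup hp) (le_max_left _ _)
    have hd : z1.1 (op (pfun (z1, z2))) ≠ z2.1 (op (pfun (z1, z2))) := by
      have : pfun (z1, z2) = (plim_sep F z1 z2 hne).choose := by
        rw [hpfun]; exact dif_pos hne
      rw [this]
      exact (plim_sep F z1 z2 hne).choose_spec
    exact (plim_coord_mono F z1 z2 hle hd) he
  have hpt : y.1 (op N) ≠ (F.obj (op N)).point := by
    have hd : y.1 (op n0) ≠ (plimPt F).1 (op n0) := (plim_sep F y (plimPt F) hypt).choose_spec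
    exact plim_coord_mono F y (plimPt F) (le_max_right _ _) hd
  have hcomp : smashRange (F.obj (op N)).point α (x.1 (op N))
      = smashMap (plimPt F) (F.obj (op N)).point (fun z : plim F => z.1 (op N)) B f :=
    congrFun (congrArg Subtype.val hx) (op N)
  have h2 : Finsupp.mapDomain (fun z : plim F => z.1 (op N)) (f : plim F →₀ B) (y.1 (op N))
      = (f : plim F →₀ B) y := by
    apply Finsupp.mapDomain_apply' (↑s : Set (plim F)) _ ?_ ?_ ?_
    · intro z hz
      exact Finset.mem_coe.2 (Finset.mem_insert_of_mem (Finset.mem_coe.1 hz))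
    · intro z1 h1 z2 h2 he
      exact hsep z1 (Finset.mem_coe.1 h1) z2 (Finset.mem_coe.1 h2) he
    · exact Finset.mem_coe.2 (Finset.mem_insert_self y _)
  have h3 : ((smashMap (plimPt F) (F.obj (op N)).point (fun z : plim F => z.1 (op N)) B f :
      Smash (F.obj (op N)).X (F.obj (op N)).point B) : (F.obj (op N)).X →₀ B) (y.1 (op N))
      = (f : plim F →₀ B) y := by
    rw [smashMap_coe, Finsupp.erase_ne hpt]
    exact h2
  refine ⟨((x.1 (op N) : Smash _ _ A) : (F.obj (op N)).X →₀ A) (y.1 (op N)), ?_⟩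
  rw [← h3, ← hcomp, smashRange_apply]

end PlimAux

/-- Let `F : ℕᵒᵖ ⥤ Set_*` be a tower of pointed sets and `0 → A → B → C → 0` a short
exact sequence of abelian groups.  Then the induced sequences
`0 → G(X,A) → G(X,B) → G(X,C)` and `0 → H(X,A) → H(X,B) → H(X,C)` are exact.
If moreover `F` satisfies the Mittag-Leffler condition, then
`0 → G(X,A) → G(X,B) → G(X,C) → 0` and `0 → H(X,A) → H(X,B) → H(X,C) → 0` are
exact. -/
theorem stmt13 (F : ℕᵒᵖ ⥤ Pointed.{w}) {A B C : Type v}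
    [AddCommGroup A] [AddCommGroup B] [AddCommGroup C]
    (α : A →+ B) (β : B →+ C)
    (hα : Function.Injective α) (hαβ : Function.Exact α β)
    (hβ : Function.Surjective β) :
    (Function.Injective (glimMap F α) ∧
      Function.Exact (glimMap F α) (glimMap F β) ∧
      Function.Injective (Hmap F α) ∧
      Function.Exact (Hmap F α) (Hmap F β)) ∧
    (MittagLeffler F →
      (Function.Surjective (glimMap F β) ∧ Function.Surjective (Hmap F β))) := by
  classical
  open Opposite in
  -- G-level injectivity
  have hGinj : Function.Injective ⇑(glimMap F α) := by
    intro h₁ h₂ he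
    apply Subtype.ext
    funext d
    exact smashRange_injective (F.obj d).point hα (congrFun (congrArg Subtype.val he) d)
  -- the composition at the G-level is zero
  have hGzero : ∀ g : glim F A, glimMap F β (glimMap F α g) = 0 := by
    intro g
    apply Subtype.ext
    funext d
    exact smashRange_smashRange_eq_zero (F.obj d).point hαβ (g.1 d)
  -- G-level exactness
  have hGexact : Function.Exact ⇑(glimMap F α) ⇑(glimMap F β) := by
    intro h
    constructor
    · intro hz
      have hv : ∀ d (y : (F.obj d).X),
          ((h.1 d : Smash (F.obj d).X (F.obj d).point B) : (F.obj d).X →₀ B) y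
            ∈ Set.range ⇑α := by
        intro d y
        have h1 : smashRange (F.obj d).point β (h.1 d) = 0 :=
          congrFun (congrArg Subtype.val hz) d
        have h2 : ((smashRange (F.obj d).point β (h.1 d) :
            Smash (F.obj d).X (F.obj d).point C) : (F.obj d).X →₀ C) y = 0 := by
          rw [h1]; rfl
        rw [smashRange_apply] at h2
        exact (hαβ _).mp h2
      choose gf hgf using fun d => exists_smashRange_eq (F.obj d).point hα (h.1 d) (hv d)
      have hmem : gf ∈ glim F A := by
        intro d d' u
        apply smashRange_injective (F.obj d').point hα
        rw [← smashMap_smashRange, hgf d, hgf d']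
        exact h.2 u
      exact ⟨⟨gf, hmem⟩, Subtype.ext (funext fun d => hgf d)⟩
    · rintro ⟨g, rfl⟩
      exact hGzero g
  -- `Hmap` on `mk`
  have hmapmkA : ∀ x : glim F A,
      Hmap F α ((x : glim F A ⧸ (rho F A).range)) = ↑(glimMap F α x) := fun _ => rfl
  have hmapmkB : ∀ x : glim F B,
      Hmap F β ((x : glim F B ⧸ (rho F B).range)) = ↑(glimMap F β x) := fun _ => rfl
  -- H-level injectivity
  have hHinj : Function.Injective ⇑(Hmap F α) := by
    rw [injective_iff_map_eq_zero]
    intro q hq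
    obtain ⟨x, rfl⟩ := QuotientAddGroup.mk_surjective q
    rw [hmapmkA x] at hq
    have hx : glimMap F α x ∈ (rho F B).range := (QuotientAddGroup.eq_zero_iff _).mp hq
    obtain ⟨f, hf⟩ := AddMonoidHom.mem_range.mp hx
    obtain ⟨g, hg⟩ := exists_pullback_of_rho F hα x f hf.symm
    have hgx : rho F A g = x := by
      apply hGinj
      rw [glimMap_rho, hg, hf]
    rw [QuotientAddGroup.eq_zero_iff x]
    exact AddMonoidHom.mem_range.mpr ⟨g, hgx⟩
  -- composition at the H-level is zero
  have hHzero : ∀ p, Hmap F β (Hmap F α p) = 0 := by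
    intro p
    obtain ⟨g, rfl⟩ := QuotientAddGroup.mk_surjective p
    rw [hmapmkA g, hmapmkB (glimMap F α g), hGzero g]
    rfl
  -- H-level exactness
  have hHexact : Function.Exact ⇑(Hmap F α) ⇑(Hmap F β) := by
    intro q
    constructor
    · intro hq
      obtain ⟨h, rfl⟩ := QuotientAddGroup.mk_surjective q
      rw [hmapmkB h] at hq
      have hq' := (QuotientAddGroup.eq_zero_iff _).mp hq
      obtain ⟨f, hf⟩ := AddMonoidHom.mem_range.mp hq'
      obtain ⟨f', hf'⟩ := smashRange_surjective (plimPt F) hβ f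
      have hz : glimMap F β (h - rho F B f') = 0 := by
        rw [map_sub, glimMap_rho F β f', hf', hf, sub_self]
      obtain ⟨g, hg⟩ := (hGexact _).mp hz
      refine Set.mem_range.mpr ⟨↑g, ?_⟩
      rw [hmapmkA g, hg, QuotientAddGroup.mk_sub]
      have h0 : ((rho F B f' : glim F B) : glim F B ⧸ (rho F B).range) = 0 :=
        (QuotientAddGroup.eq_zero_iff _).mpr (AddMonoidHom.mem_range.mpr ⟨f', rfl⟩)
      rw [h0, sub_zero]
    · rintro ⟨p, rfl⟩
      exact hHzero p
  refine ⟨⟨hGinj, hGexact, hHinj, hHexact⟩, ?_⟩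
  intro hML
  -- G-level surjectivity under Mittag-Leffler
  have hGsurj : Function.Surjective ⇑(glimMap F β) := by
    intro c
    choose s₀ hs₀le hs₀ using hML
    -- a monotone enlargement of the Mittag-Leffler bound
    set s : ℕ → ℕ := fun n => Nat.rec (s₀ 0) (fun m prev => max (s₀ (m + 1)) prev) n
      with hsdef
    have hs_succ : ∀ n, s (n + 1) = max (s₀ (n + 1)) (s n) := fun n => rfl
    have hs0le : ∀ n, s₀ n ≤ s n := by
      intro n
      cases n with
      | zero => exact le_refl _
      | succ m => rw [hs_succ]; exact le_max_left _ _
    have hsle : ∀ n, n ≤ s n := fun n => (hs₀le n).trans (hs0le n)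
    have hsmono : ∀ n, s n ≤ s (n + 1) := fun n => by rw [hs_succ]; exact le_max_right _ _
    -- stability of ranges
    have hstab : ∀ n r (h : s n ≤ r),
        Set.range (tr F (hsle n)) = Set.range (tr F ((hsle n).trans h)) := by
      intro n r h
      have e1 : Set.range (tr F (hsle n)) = Set.range (tr F (hs₀le n)) :=
        (hs₀ n (s n) (hs0le n)).symm
      have e2 : Set.range (tr F ((hsle n).trans h)) = Set.range (tr F (hs₀le n)) :=
        (hs₀ n r ((hs0le n).trans h)).symm
      rw [e1, e2]
    -- levelwise lifts whose support lies in the stable image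
    have hlift : ∀ n : ℕ, ∃ b : Smash (F.obj (op n)).X (F.obj (op n)).point B,
        smashRange (F.obj (op n)).point β b = c.1 (op n) ∧
        (((b : Smash (F.obj (op n)).X (F.obj (op n)).point B) :
          (F.obj (op n)).X →₀ B).support : Set (F.obj (op n)).X)
            ⊆ Set.range (tr F (hsle n)) := by
      intro n
      obtain ⟨bt, hbt⟩ := smashRange_surjective (F.obj (op (s n))).point hβ (c.1 (op (s n)))
      refine ⟨trS F B (hsle n) bt, ?_, trS_support_subset F (hsle n) bt⟩
      rw [← trS_smashRange F β (hsle n) bt, hbt]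
      exact glim_compat F c (hsle n)
    -- the inductive step
    have hstep : ∀ n (b : Smash (F.obj (op n)).X (F.obj (op n)).point B),
        smashRange (F.obj (op n)).point β b = c.1 (op n) →
        (((b : Smash (F.obj (op n)).X (F.obj (op n)).point B) :
          (F.obj (op n)).X →₀ B).support : Set (F.obj (op n)).X)
            ⊆ Set.range (tr F (hsle n)) →
        ∃ b' : Smash (F.obj (op (n + 1))).X (F.obj (op (n + 1))).point B,
          (smashRange (F.obj (op (n + 1))).point β b' = c.1 (op (n + 1)) ∧
            (((b' : Smash (F.obj (op (n + 1))).X (F.obj (op (n + 1))).point B) :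
              (F.obj (op (n + 1))).X →₀ B).support : Set (F.obj (op (n + 1))).X)
                ⊆ Set.range (tr F (hsle (n + 1)))) ∧
          trS F B (Nat.le_succ n) b' = b := by
      intro n b hb1 hb2
      obtain ⟨b'', hb''1, hb''2⟩ := hlift (n + 1)
      obtain ⟨bt, hbt⟩ := exists_trS_eq F (hsle (n + 1)) b'' hb''2
      have hn1 : n ≤ s (n + 1) := (Nat.le_succ n).trans (hsle (n + 1))
      set d : Smash (F.obj (op n)).X (F.obj (op n)).point B :=
        trS F B (Nat.le_succ n) b'' - b with hd
      have hdz : smashRange (F.obj (op n)).point β d = 0 := by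
        rw [hd, map_sub, ← trS_smashRange F β (Nat.le_succ n) b'', hb''1, hb1,
          glim_compat F c (Nat.le_succ n), sub_self]
      have hdvals : ∀ y, ((d : Smash (F.obj (op n)).X (F.obj (op n)).point B) :
          (F.obj (op n)).X →₀ B) y ∈ Set.range ⇑α := by
        intro y
        apply (hαβ _).mp
        have h0 : ((smashRange (F.obj (op n)).point β d :
            Smash (F.obj (op n)).X (F.obj (op n)).point C) : (F.obj (op n)).X →₀ C) y = 0 := by
          rw [hdz]; rfl
        rwa [smashRange_apply] at h0
      obtain ⟨e, he⟩ := exists_smashRange_eq (F.obj (op n)).point hα d hdvals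
      have hdcoe : ((d : Smash (F.obj (op n)).X (F.obj (op n)).point B) :
          (F.obj (op n)).X →₀ B)
          = ((trS F B (Nat.le_succ n) b'' : Smash (F.obj (op n)).X (F.obj (op n)).point B) :
            (F.obj (op n)).X →₀ B) - (b : (F.obj (op n)).X →₀ B) := by
        rw [hd]; rfl
      have hsuppd : (((d : Smash (F.obj (op n)).X (F.obj (op n)).point B) :
          (F.obj (op n)).X →₀ B).support : Set (F.obj (op n)).X)
            ⊆ Set.range (tr F hn1) := by
        intro z hz
        rw [Finset.mem_coe, hdcoe] at hz
        rcases Finset.mem_union.1 (Finsupp.support_sub hz) with hcase | hcase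
        · have hb''eq : trS F B (Nat.le_succ n) b'' = trS F B hn1 bt := by
            rw [← hbt, trS_trS]
          rw [hb''eq] at hcase
          exact trS_support_subset F hn1 bt (Finset.mem_coe.2 hcase)
        · have h' := hb2 (Finset.mem_coe.2 hcase)
          rw [hstab n (s (n + 1)) (hsmono n)] at h'
          exact h'
      have hesupp : (((e : Smash (F.obj (op n)).X (F.obj (op n)).point A) :
          (F.obj (op n)).X →₀ A).support : Set (F.obj (op n)).X)
            ⊆ Set.range (tr F hn1) := by
        intro z hz
        apply hsuppd
        simp only [Finset.mem_coe, Finsupp.mem_support_iff] at hz ⊢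
        intro hdz0
        apply hz
        have hval : α (((e : Smash (F.obj (op n)).X (F.obj (op n)).point A) :
            (F.obj (op n)).X →₀ A) z)
            = ((d : Smash (F.obj (op n)).X (F.obj (op n)).point B) :
              (F.obj (op n)).X →₀ B) z := by
          rw [← he, smashRange_apply]
        have hz0 : α (((e : Smash (F.obj (op n)).X (F.obj (op n)).point A) :
            (F.obj (op n)).X →₀ A) z) = α 0 := by
          rw [hval, hdz0, map_zero]
        exact hα hz0
      obtain ⟨et, het⟩ := exists_trS_eq F hn1 e hesupp
      refine ⟨b'' - smashRange (F.obj (op (n + 1))).point α (trS F A (hsle (n + 1)) et),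
        ⟨?_, ?_⟩, ?_⟩
      · rw [map_sub, hb''1, smashRange_smashRange_eq_zero _ hαβ, sub_zero]
      · intro z hz
        rw [Finset.mem_coe] at hz
        rcases Finset.mem_union.1 (Finsupp.support_sub hz) with hcase | hcase
        · exact hb''2 (Finset.mem_coe.2 hcase)
        · have h1 : z ∈ ((trS F A (hsle (n + 1)) et :
            Smash (F.obj (op (n + 1))).X (F.obj (op (n + 1))).point A) :
              (F.obj (op (n + 1))).X →₀ A).support := Finsupp.support_mapRange (hf := α.map_zero) hcase
          exact trS_support_subset F (hsle (n + 1)) et (Finset.mem_coe.2 h1)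
      · have h1 : trS F B (Nat.le_succ n)
            (smashRange (F.obj (op (n + 1))).point α (trS F A (hsle (n + 1)) et))
            = smashRange (F.obj (op n)).point α
              (trS F A (Nat.le_succ n) (trS F A (hsle (n + 1)) et)) :=
          trS_smashRange F α (Nat.le_succ n) _
        have h2 : trS F A (Nat.le_succ n) (trS F A (hsle (n + 1)) et) = e := by
          rw [trS_trS]
          exact het
        rw [map_sub, h1, h2, he, hd]
        exact sub_sub_cancel _ _
    choose stepf hstepH using hstep
    obtain ⟨b0, hb01, hb02⟩ := hlift 0
    let T : ℕ → Type _ := fun n => {b : Smash (F.obj (op n)).X (F.obj (op n)).point B //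
      smashRange (F.obj (op n)).point β b = c.1 (op n) ∧
      (((b : Smash (F.obj (op n)).X (F.obj (op n)).point B) :
        (F.obj (op n)).X →₀ B).support : Set (F.obj (op n)).X)
          ⊆ Set.range (tr F (hsle n))}
    let seq : ∀ n, T n := fun n => Nat.rec (⟨b0, hb01, hb02⟩ : T 0)
      (fun m p => (⟨stepf m p.1 p.2.1 p.2.2,
        (hstepH m p.1 p.2.1 p.2.2).1.1, (hstepH m p.1 p.2.1 p.2.2).1.2⟩ : T (m + 1))) n
    have hseq : ∀ n, trS F B (Nat.le_succ n) (seq (n + 1)).1 = (seq n).1 :=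
      fun n => (hstepH n (seq n).1 (seq n).2.1 (seq n).2.2).2
    refine ⟨⟨fun d => (seq d.unop).1, mem_glim_of_step F _ fun n => hseq n⟩, ?_⟩
    apply Subtype.ext
    funext d
    exact (seq d.unop).2.1
  -- H-level surjectivity
  have hHsurj : Function.Surjective ⇑(Hmap F β) := by
    intro q
    obtain ⟨h, rfl⟩ := QuotientAddGroup.mk_surjective q
    obtain ⟨b, hb⟩ := hGsurj h
    exact ⟨↑b, by rw [hmapmkB b, hb]⟩
  exact ⟨hGsurj, hHsurj⟩
end

section
/- Let A be an abelian group, 𝒯 a countable directed poset and X : 𝒯 → Set_* a diagram of pointed sets satisfying the Mittag-Leffler condition. Then the cokernel H(X,A) of the natural map ρ is algebraically compact; explicitly, H(X,A) is cotorsion and for every prime p the subgroup ⋂_{n∈ℕ} pⁿ·H(X,A) is p-divisible, i.e., p·(⋂_{n∈ℕ} pⁿ·H(X,A)) = ⋂_{n∈ℕ} pⁿ·H(X,A). -/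
open CategoryTheory Finsupp

universe u v w

/-- `C` is cotorsion, i.e. `Ext¹_ℤ(ℚ, C) = 0`.  Applying `Hom(-, C)` to the standard
free presentation `0 → ⊕_{n ∈ ℕ} ℤ → ⊕_{n ∈ ℕ} ℤ → ℚ → 0` (where the first map sends
`e_n ↦ e_n - (n+1)·e_{n+1}`) identifies `Ext¹_ℤ(ℚ, C)` with the cokernel of
`C^ℕ → C^ℕ, (x_n) ↦ (x_n - (n+1)x_{n+1})`; hence `Ext¹_ℤ(ℚ, C) = 0` iff every system
of equations `x_n - (n+1)·x_{n+1} = a_n` (`n ∈ ℕ`) is solvable in `C`. -/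
def Cotorsion (C : Type*) [AddCommGroup C] : Prop :=
  ∀ a : ℕ → C, ∃ x : ℕ → C, ∀ n : ℕ, x n - (n + 1) • x (n + 1) = a n
namespace S16
open Opposite
open scoped Classical

noncomputable section
variable {T : Type u} [PartialOrder T] (F : Tᵒᵖ ⥤ Pointed.{w}) (A : Type*) [AddCommGroup A]

/-- pushforward on points -/
def ps {a b : T} (h : a ≤ b) : (F.obj (op b)).X → (F.obj (op a)).X :=
  (F.map (homOfLE h).op).toFun

lemma ps_pt {a b : T} (h : a ≤ b) :
    ps F h (F.obj (op b)).point = (F.obj (op a)).point :=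
  (F.map (homOfLE h).op).map_point

lemma ps_comp {a b c : T} (hab : a ≤ b) (hbc : b ≤ c) (z : (F.obj (op c)).X) :
    ps F hab (ps F hbc z) = ps F (hab.trans hbc) z := by
  have h1 : (homOfLE (hab.trans hbc)).op = (homOfLE hbc).op ≫ (homOfLE hab).op := by
    rw [← op_comp, homOfLE_comp]
  show (F.map (homOfLE hbc).op ≫ F.map (homOfLE hab).op).toFun z = _
  rw [← F.map_comp, ← h1]
  rfl

/-- pushforward on smash groups -/
def pss {a b : T} (h : a ≤ b) :
    Smash (F.obj (op b)).X (F.obj (op b)).point A →+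
      Smash (F.obj (op a)).X (F.obj (op a)).point A :=
  smashMap _ _ (ps F h) A

lemma pss_comp {a b c : T} (hab : a ≤ b) (hbc : b ≤ c)
    (f : Smash (F.obj (op c)).X (F.obj (op c)).point A) :
    pss F A hab (pss F A hbc f) = pss F A (hab.trans hbc) f := by
  have hfun : ps F hab ∘ ps F hbc = ps F (hab.trans hbc) := funext (ps_comp F hab hbc)
  show smashMap _ _ (ps F hab) A (smashMap _ _ (ps F hbc) A f) = _
  rw [smashMap_comp _ _ _ (ps F hbc) (ps F hab) (ps_pt F hab) A f, hfun]
  rfl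

lemma pss_def {a b : T} (h : a ≤ b) :
    pss F A h = smashMap (F.obj (op b)).point (F.obj (op a)).point (ps F h) A := rfl

lemma glim_push (g : ↥(glim F A)) {a b : T} (h : a ≤ b) :
    pss F A h (g.1 (op b)) = g.1 (op a) :=
  g.2 ((homOfLE h).op)

lemma plim_push (x : plim F) {a b : T} (h : a ≤ b) :
    ps F h (x.1 (op b)) = x.1 (op a) :=
  x.2 ((homOfLE h).op)

lemma rho_coord (f : ↥(Smash (plim F) (plimPt F) A)) (d : Tᵒᵖ) :
    ((rho F A f).1 d) = smashMap (plimPt F) (F.obj d).point (fun x => x.1 d) A f := rfl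

lemma smash_val_pt {Y : Type*} {y0 : Y} (f : ↥(Smash Y y0 A)) : (f.1 : Y →₀ A) y0 = 0 := f.2

lemma smashMap_apply_ne {Y Z : Type*} (y0 : Y) (z0 : Z) (g : Y → Z)
    (f : ↥(Smash Y y0 A)) {z : Z} (hz : z ≠ z0) :
    ((smashMap y0 z0 g A f).1 : Z →₀ A) z
      = ∑ y ∈ (f.1 : Y →₀ A).support, if g y = z then (f.1 : Y →₀ A) y else 0 := by
  classical
  show ((Finsupp.mapDomain g (f.1 : Y →₀ A)).erase z0) z = _
  rw [Finsupp.erase_ne hz, Finsupp.mapDomain, Finsupp.sum_apply, Finsupp.sum]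
  refine Finset.sum_congr rfl ?_
  intro y _
  rw [Finsupp.single_apply]

end
end S16
namespace S16
open Opposite
open scoped Classical
noncomputable section
variable {T : Type u} [PartialOrder T] (F : Tᵒᵖ ⥤ Pointed.{w}) (A : Type*) [AddCommGroup A]

lemma hom_eq {d d' : Tᵒᵖ} (u : d ⟶ d') : u = (homOfLE (leOfHom u.unop)).op :=
  congrArg Quiver.Hom.op (Subsingleton.elim u.unop _)

/-- coordinate of a glim element, as a hom to the Smash group -/
def coordHom (d : Tᵒᵖ) :
    ↥(glim F A) →+ ↥(Smash (F.obj d).X (F.obj d).point A) :=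
  (Pi.evalAddMonoidHom _ d).comp (glim F A).subtype

lemma coordHom_apply (g : ↥(glim F A)) (d : Tᵒᵖ) : coordHom F A d g = g.1 d := rfl

/-- value of a glim element at a point, as a hom to A -/
def vlHom (d : Tᵒᵖ) (y : (F.obj d).X) : ↥(glim F A) →+ A :=
  ((Finsupp.applyAddHom y).comp (Smash (F.obj d).X (F.obj d).point A).subtype).comp
    (coordHom F A d)

lemma vlHom_apply (g : ↥(glim F A)) (d : Tᵒᵖ) (y : (F.obj d).X) :
    vlHom F A d y g = ((g.1 d).1 : _ →₀ A) y := rfl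

/-- the subgroup `p^n A` -/
def P (p n : ℕ) : AddSubgroup A where
  carrier := Set.range (fun a : A => p ^ n • a)
  add_mem' := by rintro _ _ ⟨a, rfl⟩ ⟨b, rfl⟩; exact ⟨a + b, by simp [smul_add]⟩
  zero_mem' := ⟨0, smul_zero _⟩
  neg_mem' := by rintro _ ⟨a, rfl⟩; exact ⟨-a, by simp⟩

lemma P_mono (p : ℕ) {m n : ℕ} (h : m ≤ n) : P A p n ≤ P A p m := by
  rintro _ ⟨a, rfl⟩
  exact ⟨p ^ (n - m) • a, by dsimp only; rw [smul_smul, ← pow_add, Nat.add_sub_cancel' h]⟩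

lemma smul_mem_P (p n : ℕ) (a : A) : p ^ n • a ∈ P A p n := ⟨a, rfl⟩

lemma smashMap_val_mem {Y Z : Type*} (y0 : Y) (z0 : Z) (g : Y → Z)
    (f : ↥(Smash Y y0 A)) (Q : AddSubgroup A) (hf : ∀ y, (f.1 : Y →₀ A) y ∈ Q) (z : Z) :
    ((smashMap y0 z0 g A f).1 : Z →₀ A) z ∈ Q := by
  by_cases hz : z = z0
  · rw [hz, smash_val_pt]; exact Q.zero_mem
  · rw [smashMap_apply_ne A y0 z0 g f hz]
    refine sum_mem ?_
    intro y _
    by_cases h : g y = z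
    · simpa [h] using hf y
    · simp only [h, if_false]; exact Q.zero_mem

section chain
variable (T)
variable [IsDirected T (· ≤ ·)] [Nonempty T] [Countable T]

def enum : ℕ → T := (exists_surjective_nat T).choose

def chain : ℕ → T
  | 0 => enum T 0
  | n + 1 => (directed_of (· ≤ ·) (chain n) (enum T (n + 1))).choose

lemma chain_le_succ (n : ℕ) : chain T n ≤ chain T (n + 1) :=
  (directed_of (· ≤ ·) (chain T n) (enum T (n + 1))).choose_spec.1

lemma chain_mono : Monotone (chain T) := monotone_nat_of_le_succ (chain_le_succ T)

lemma le_chain (t : T) : ∃ n, t ≤ chain T n := by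
  obtain ⟨n, rfl⟩ := (exists_surjective_nat T).choose_spec t
  cases n with
  | zero => exact ⟨0, le_refl _⟩
  | succ m =>
      exact ⟨m + 1, (directed_of (· ≤ ·) (chain T m) (enum T (m + 1))).choose_spec.2⟩

def lev (t : T) : ℕ := (le_chain T t).choose

lemma lev_spec (t : T) : t ≤ chain T (lev T t) := (le_chain T t).choose_spec

end chain

section ML
variable [IsDirected T (· ≤ ·)]
variable {F}
variable (hML : MittagLeffler F)

def mlw (t : T) : T := (hML t).choose

lemma mlw_le (t : T) : t ≤ mlw hML t := (hML t).choose_spec.choose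

lemma mlw_spec (t : T) {r : T} (hsr : mlw hML t ≤ r) :
    Set.range (ps F (mlw_le hML t)) = Set.range (ps F ((mlw_le hML t).trans hsr)) :=
  (hML t).choose_spec.choose_spec r hsr

/-- the stable image at `t` -/
def SI (t : T) : Set (F.obj (op t)).X := Set.range (ps F (mlw_le hML t))

lemma SI_push_onto {t t' : T} (h : t ≤ t') {y : (F.obj (op t)).X} (hy : y ∈ SI hML t) :
    ∃ z, z ∈ SI hML t' ∧ ps F h z = y := by
  obtain ⟨r, hr1, hr2⟩ := directed_of (· ≤ ·) (mlw hML t) (mlw hML t')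
  have h1 : y ∈ Set.range (ps F ((mlw_le hML t).trans hr1)) := by
    rw [← mlw_spec hML t hr1]; exact hy
  obtain ⟨v, hv⟩ := h1
  refine ⟨ps F ((mlw_le hML t').trans hr2) v, ?_, ?_⟩
  · rw [SI, mlw_spec hML t' hr2]
    exact ⟨v, rfl⟩
  · rw [ps_comp]
    exact hv
end ML
end
end S16
namespace S16
open Opposite
open scoped Classical
noncomputable section
variable {T : Type u} [PartialOrder T] {F : Tᵒᵖ ⥤ Pointed.{w}}

lemma ps_id (F : Tᵒᵖ ⥤ Pointed.{w}) {a : T} (h : a ≤ a) (z : (F.obj (op a)).X) :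
    ps F h z = z := by
  have h1 : (homOfLE h).op = 𝟙 (op a) := by
    rw [Subsingleton.elim (homOfLE h) (𝟙 a)]
    rfl
  show (F.map _).toFun z = z
  rw [h1, F.map_id]
  rfl

variable [IsDirected T (· ≤ ·)] [Nonempty T] [Countable T]
variable (hML : MittagLeffler F)

lemma supp_SI {A : Type u_1} [AddCommGroup A] (g : ↥(glim F A)) (t : T)
    {y : (F.obj (op t)).X} (hy : ((g.1 (op t)).1 : _ →₀ A) y ≠ 0) : y ∈ SI hML t := by
  have hpush := glim_push F A g (mlw_le hML t)
  by_cases hpt : y = (F.obj (op t)).point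
  · rw [hpt] at hy
    exact absurd (smash_val_pt A (g.1 (op t))) hy
  · rw [← hpush, pss_def, smashMap_apply_ne A _ _ _ _ hpt] at hy
    obtain ⟨yy, _, hne⟩ := Finset.exists_ne_zero_of_sum_ne_zero hy
    by_cases hc : ps F (mlw_le hML t) yy = y
    · exact ⟨yy, hc⟩
    · simp [hc] at hne

def nextz (n : ℕ) (z : {z : (F.obj (op (chain T n))).X // z ∈ SI hML (chain T n)}) :
    {z : (F.obj (op (chain T (n + 1)))).X // z ∈ SI hML (chain T (n + 1))} :=
  ⟨(SI_push_onto hML (chain_le_succ T n) z.2).choose,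
   (SI_push_onto hML (chain_le_succ T n) z.2).choose_spec.1⟩

lemma nextz_spec (n : ℕ) (z) :
    ps F (chain_le_succ T n) (nextz hML n z).1 = z.1 :=
  (SI_push_onto hML (chain_le_succ T n) z.2).choose_spec.2

lemma thread_exists (n : ℕ) (y : (F.obj (op (chain T n))).X)
    (hy : y ∈ SI hML (chain T n)) :
    ∃ x : plim F, x.1 (op (chain T n)) = y := by
  let xs : ∀ m : ℕ, {z : (F.obj (op (chain T (n + m)))).X // z ∈ SI hML (chain T (n + m))} :=
    fun m => Nat.rec ⟨y, hy⟩ (fun m z => nextz hML (n + m) z) m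
  have hstep : ∀ m, ps F (chain_le_succ T (n + m)) (xs (m + 1)).1 = (xs m).1 :=
    fun m => nextz_spec hML (n + m) (xs m)
  have hcz : ∀ m m' (h : m ≤ m'),
      ps F (chain_mono T (Nat.add_le_add_left h n)) (xs m').1 = (xs m).1 := by
    intro m m' h
    induction m', h using Nat.le_induction with
    | base => exact ps_id F _ _
    | succ m' hm ih =>
        have h2 : chain T (n + m') ≤ chain T (n + (m' + 1)) := chain_le_succ T (n + m')
        rw [← ps_comp F (chain_mono T (Nat.add_le_add_left hm n)) h2 ((xs (m' + 1 )).1)]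
        rw [hstep m', ih]
  let xfun : ∀ d : Tᵒᵖ, (F.obj d).X := fun d =>
    ps F ((lev_spec T (unop d)).trans (chain_mono T (Nat.le_add_left _ n)))
      ((xs (lev T (unop d))).1)
  have hx : ∀ (d : Tᵒᵖ) (m : ℕ) (hm : unop d ≤ chain T (n + m)),
      xfun d = ps F hm ((xs m).1) := by
    intro d m hm
    have e1 : ps F hm ((xs m).1)
        = ps F (hm.trans (chain_mono T (Nat.add_le_add_left (le_max_left m (lev T (unop d))) n)))
            ((xs (max m (lev T (unop d)))).1) := by
      rw [← hcz m _ (le_max_left m (lev T (unop d))), ps_comp]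
    have e2 : xfun d
        = ps F (((lev_spec T (unop d)).trans (chain_mono T (Nat.le_add_left _ n))).trans
            (chain_mono T (Nat.add_le_add_left (le_max_right m (lev T (unop d))) n)))
            ((xs (max m (lev T (unop d)))).1) := by
      show ps F _ ((xs (lev T (unop d))).1) = _
      rw [← hcz _ _ (le_max_right m (lev T (unop d))), ps_comp]
    rw [e1, e2]
  have hmem : xfun ∈ plim F := by
    intro d d' u
    rw [hom_eq u]
    show ps F (leOfHom u.unop) (xfun d) = xfun d'
    rw [hx d (lev T (unop d)) ((lev_spec T (unop d)).trans (chain_mono T (Nat.le_add_left _ n)))]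
    rw [ps_comp]
    exact (hx d' (lev T (unop d)) (((leOfHom u.unop)).trans
      ((lev_spec T (unop d)).trans (chain_mono T (Nat.le_add_left _ n))))).symm
  refine ⟨⟨xfun, hmem⟩, ?_⟩
  show xfun (op (chain T n)) = y
  rw [hx (op (chain T n)) 0 (le_of_eq (by rw [Nat.add_zero]))]
  exact ps_id F _ _

variable {A : Type u_1} [AddCommGroup A]

include hML in
lemma dmatch (g : ↥(glim F A)) (n : ℕ) :
    ∃ f : ↥(Smash (plim F) (plimPt F) A),
      (∀ x : plim F, (f.1 : _ →₀ A) x = 0 ∨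
        ∃ y, (f.1 : _ →₀ A) x = ((g.1 (op (chain T n))).1 : _ →₀ A) y) ∧
      (∀ d : Tᵒᵖ, unop d ≤ chain T n → (rho F A f).1 d = g.1 d) := by
  set w : (F.obj (op (chain T n))).X →₀ A := (g.1 (op (chain T n))).1 with hw
  have hwpt : w (F.obj (op (chain T n))).point = 0 := smash_val_pt A _
  let xf : (F.obj (op (chain T n))).X → plim F := fun y =>
    if h : w y ≠ 0 then (thread_exists hML n y (supp_SI hML g _ h)).choose else plimPt F
  have hxf : ∀ y, w y ≠ 0 → (xf y).1 (op (chain T n)) = y := by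
    intro y h
    simp only [xf, dif_pos h]
    exact (thread_exists hML n y (supp_SI hML g _ h)).choose_spec
  have hxfinj : ∀ y₁ ∈ w.support, ∀ y₂ ∈ w.support, xf y₁ = xf y₂ → y₁ = y₂ := by
    intro y₁ h₁ y₂ h₂ he
    rw [← hxf y₁ (Finsupp.mem_support_iff.mp h₁), ← hxf y₂ (Finsupp.mem_support_iff.mp h₂), he]
  let f₀ : plim F →₀ A := ∑ y ∈ w.support, Finsupp.single (xf y) (w y)
  have hf₀supp : f₀.support ⊆ w.support.image xf := by
    refine (Finsupp.support_finset_sum).trans ?_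
    intro x hx
    rw [Finset.mem_biUnion] at hx
    obtain ⟨y, hy, hxy⟩ := hx
    have := Finsupp.support_single_subset hxy
    rw [Finset.mem_singleton] at this
    rw [this]
    exact Finset.mem_image_of_mem xf hy
  have hxfne : ∀ y ∈ w.support, xf y ≠ plimPt F := by
    intro y hy he
    have h1 := hxf y (Finsupp.mem_support_iff.mp hy)
    rw [he] at h1
    exact Finsupp.mem_support_iff.mp hy (by rw [← h1]; exact hwpt)
  have hf₀val : ∀ y ∈ w.support, f₀ (xf y) = w y := by
    intro y hy
    rw [Finsupp.finset_sum_apply]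
    rw [Finset.sum_eq_single_of_mem y hy ?side]
    · rw [Finsupp.single_eq_same]
    case side =>
      intro b hb hbne
      rw [Finsupp.single_apply, if_neg (fun he => hbne (hxfinj b hb y hy he))]
  have hmem : f₀ ∈ Smash (plim F) (plimPt F) A := by
    show f₀ (plimPt F) = 0
    by_cases h : plimPt F ∈ f₀.support
    · obtain ⟨y, hy, hxy⟩ := Finset.mem_image.mp (hf₀supp h)
      exact absurd hxy (hxfne y hy)
    · exact Finsupp.notMem_support_iff.mp h
  set f : ↥(Smash (plim F) (plimPt F) A) := ⟨f₀, hmem⟩ with hf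
  have hval : ∀ (d : Tᵒᵖ) (q : (F.obj d).X), q ≠ (F.obj d).point →
      ((rho F A f).1 d).1 q = ∑ y ∈ w.support, if (xf y).1 d = q then w y else 0 := by
    intro d q hq
    rw [rho_coord, smashMap_apply_ne A _ _ _ f hq]
    rw [Finset.sum_subset (hf₀supp) ?van]
    case van =>
      intro x _ hx
      simp [hf, Finsupp.notMem_support_iff.mp hx]
    rw [Finset.sum_image hxfinj]
    refine Finset.sum_congr rfl ?_
    intro y hy
    by_cases hc : (xf y).1 d = q
    · rw [if_pos hc, if_pos hc, hf₀val y hy]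
    · rw [if_neg hc, if_neg hc]
  have htop : (rho F A f).1 (op (chain T n)) = g.1 (op (chain T n)) := by
    apply Subtype.ext
    ext q
    by_cases hq : q = (F.obj (op (chain T n))).point
    · rw [hq]
      exact (smash_val_pt A _).trans hwpt.symm
    · rw [show ((g.1 (op (chain T n))).1 : _ →₀ A) q = w q from rfl]
      rw [hval _ q hq]
      rw [Finset.sum_congr rfl (fun y hy => by
        rw [hxf y (Finsupp.mem_support_iff.mp hy)])]
      rw [Finset.sum_ite_eq' w.support q w]
      by_cases hqs : q ∈ w.support
      · rw [if_pos hqs]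
      · rw [if_neg hqs, Finsupp.notMem_support_iff.mp hqs]
  refine ⟨f, ?_, ?_⟩
  · intro x
    by_cases hx : x ∈ f₀.support
    · obtain ⟨y, hy, hxy⟩ := Finset.mem_image.mp (hf₀supp hx)
      exact Or.inr ⟨y, by rw [show (f.1 : _ →₀ A) x = f₀ x from rfl, ← hxy, hf₀val y hy]⟩
    · exact Or.inl (Finsupp.notMem_support_iff.mp hx)
  · intro d hd
    show (rho F A f).1 (op (unop d)) = g.1 (op (unop d))
    rw [← glim_push F A (rho F A f) hd, htop, glim_push F A g hd]

lemma coeff_exists (f : ↥(Smash (plim F) (plimPt F) A)) :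
    ∃ m : ℕ, ∀ x ∈ (f.1 : _ →₀ A).support,
      (f.1 : _ →₀ A) x
        = ((rho F A f).1 (op (chain T m))).1 (x.1 (op (chain T m))) := by
  have sep : ∀ x x' : plim F, x ≠ x' →
      ∃ m, ∀ m' ≥ m, x.1 (op (chain T m')) ≠ x'.1 (op (chain T m')) := by
    intro x x' hne
    have : ∃ d, x.1 d ≠ x'.1 d := by
      by_contra hc
      push_neg at hc
      exact hne (Subtype.ext (funext hc))
    obtain ⟨d, hd⟩ := this
    refine ⟨lev T (unop d), ?_⟩
    intro m' hm' he
    have hle : unop d ≤ chain T m' := (lev_spec T (unop d)).trans (chain_mono T hm')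
    have e1 := plim_push F x hle
    have e2 := plim_push F x' hle
    rw [he] at e1
    exact hd (by rw [show x.1 d = x.1 (op (unop d)) from rfl, ← e1, e2])
  set s : Finset (plim F) := insert (plimPt F) (f.1 : _ →₀ A).support with hs
  let Mfun : plim F → plim F → ℕ := fun x x' =>
    if h : x = x' then 0 else (sep x x' h).choose
  set m := s.sup (fun x => s.sup (Mfun x)) with hm
  have hsep : ∀ x ∈ s, ∀ x' ∈ s, x ≠ x' →
      x.1 (op (chain T m)) ≠ x'.1 (op (chain T m)) := by
    intro x hx x' hx' hne
    have hle : Mfun x x' ≤ m :=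
      le_trans (Finset.le_sup (f := Mfun x) hx') (Finset.le_sup (f := fun x => s.sup (Mfun x)) hx)
    have := (sep x x' hne).choose_spec m (by
      rw [show Mfun x x' = (sep x x' hne).choose from dif_neg hne] at hle
      exact hle)
    exact this
  refine ⟨m, ?_⟩
  intro x hx
  have hxs : x ∈ s := Finset.mem_insert_of_mem hx
  have hxne : x ≠ plimPt F := by
    intro he
    rw [he] at hx
    exact Finsupp.mem_support_iff.mp hx (smash_val_pt A f)
  have hq : x.1 (op (chain T m)) ≠ (F.obj (op (chain T m))).point :=
    hsep x hxs (plimPt F) (Finset.mem_insert_self _ _) hxne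
  rw [rho_coord, smashMap_apply_ne A _ _ _ f hq]
  rw [Finset.sum_eq_single_of_mem x hx ?side]
  · rw [if_pos rfl]
  case side =>
    intro b hb hbne
    rw [if_neg (hsep b (Finset.mem_insert_of_mem hb) x hxs hbne)]
end
end S16
namespace S16
open Opposite
open scoped Classical
noncomputable section
set_option linter.unusedSectionVars false
variable {T : Type u} [PartialOrder T] {F : Tᵒᵖ ⥤ Pointed.{w}}
variable {A : Type u_1} [AddCommGroup A]

lemma smash_val_nsmul {Y : Type*} {y0 : Y} (m : ℕ) (f : ↥(Smash Y y0 A)) (y : Y) :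
    ((m • f).1 : Y →₀ A) y = m • ((f.1 : Y →₀ A) y) :=
  map_nsmul ((Finsupp.applyAddHom y).comp (Smash Y y0 A).subtype) m f

lemma smash_val_add {Y : Type*} {y0 : Y} (f g : ↥(Smash Y y0 A)) (y : Y) :
    (((f + g).1 : Y →₀ A)) y = (f.1 : Y →₀ A) y + (g.1 : Y →₀ A) y := rfl

lemma smash_val_sub {Y : Type*} {y0 : Y} (f g : ↥(Smash Y y0 A)) (y : Y) :
    (((f - g).1 : Y →₀ A)) y = (f.1 : Y →₀ A) y - (g.1 : Y →₀ A) y :=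
  map_sub ((Finsupp.applyAddHom y).comp (Smash Y y0 A).subtype) f g

lemma rho_val_mem (f : ↥(Smash (plim F) (plimPt F) A)) (Q : AddSubgroup A)
    (hf : ∀ x, (f.1 : _ →₀ A) x ∈ Q) (d : Tᵒᵖ) (y : (F.obj d).X) :
    ((rho F A f).1 d).1 y ∈ Q := by
  rw [rho_coord]
  exact smashMap_val_mem A _ _ _ f Q hf y

lemma exists_div (p n : ℕ) {Y : Type*} {y0 : Y} (f : ↥(Smash Y y0 A))
    (hf : ∀ y, (f.1 : Y →₀ A) y ∈ P A p n) :
    ∃ f' : ↥(Smash Y y0 A), p ^ n • f' = f := by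
  have hch : ∀ y, ∃ a : A, p ^ n • a = (f.1 : Y →₀ A) y := fun y => hf y
  let dv : Y → A := fun y => if h : (f.1 : Y →₀ A) y = 0 then 0 else (hch y).choose
  have hdv : ∀ y, p ^ n • dv y = (f.1 : Y →₀ A) y := by
    intro y
    by_cases h : (f.1 : Y →₀ A) y = 0
    · simp [dv, h]
    · simp only [dv, dif_neg h]
      exact (hch y).choose_spec
  let f'0 : Y →₀ A := Finsupp.onFinset (f.1 : Y →₀ A).support dv (by
    intro y hy
    rw [Finsupp.mem_support_iff]
    intro h
    exact hy (by simp [dv, h]))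
  have hmem : f'0 ∈ Smash Y y0 A := by
    show dv y0 = 0
    simp [dv, smash_val_pt A f]
  refine ⟨⟨f'0, hmem⟩, ?_⟩
  apply Subtype.ext
  apply Finsupp.ext
  intro y
  have h1 : ((p ^ n • (⟨f'0, hmem⟩ : ↥(Smash Y y0 A))).1 : Y →₀ A) y = p ^ n • dv y :=
    smash_val_nsmul _ _ y
  rw [h1, hdv y]

section sum
variable [IsDirected T (· ≤ ·)] [Nonempty T] [Countable T]

lemma sumG_exists (e : ℕ → ↥(glim F A)) (c : ℕ → ℕ)
    (he : ∀ k (d : Tᵒᵖ), unop d ≤ chain T k → (e k).1 d = 0) :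
    ∃ s : ↥(glim F A), ∀ (d : Tᵒᵖ) (N : ℕ), unop d ≤ chain T N →
      s.1 d = ∑ k ∈ Finset.range N, c k • (e k).1 d := by
  set s0 : ∀ d : Tᵒᵖ, ↥(Smash (F.obj d).X (F.obj d).point A) :=
    fun d => ∑ k ∈ Finset.range (lev T (unop d)), c k • (e k).1 d with hs0
  have key : ∀ (d : Tᵒᵖ) (M N' : ℕ), N' ≤ M → unop d ≤ chain T N' →
      ∑ k ∈ Finset.range M, c k • (e k).1 d = ∑ k ∈ Finset.range N', c k • (e k).1 d := by
    intro d M N' hle hdn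
    refine (Finset.sum_subset (Finset.range_subset_range.mpr hle) ?_).symm
    intro k _ hk
    rw [Finset.mem_range, not_lt] at hk
    rw [he k d (hdn.trans (chain_mono T hk)), smul_zero]
  have hstab : ∀ (d : Tᵒᵖ) (N : ℕ), unop d ≤ chain T N →
      ∑ k ∈ Finset.range N, c k • (e k).1 d = s0 d := by
    intro d N hN
    rw [← key d (max N (lev T (unop d))) N (le_max_left _ _) hN]
    exact key d (max N (lev T (unop d))) (lev T (unop d)) (le_max_right _ _)
      (lev_spec T (unop d))
  have hmem : s0 ∈ glim F A := by
    intro d d' u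
    rw [hom_eq u]
    show pss F A (leOfHom u.unop) (s0 d) = s0 d'
    set N := max (lev T (unop d)) (lev T (unop d')) with hN
    have hdN : unop d ≤ chain T N := (lev_spec T (unop d)).trans (chain_mono T (le_max_left _ _))
    have hdN' : unop d' ≤ chain T N :=
      (lev_spec T (unop d')).trans (chain_mono T (le_max_right _ _))
    rw [← hstab d N hdN, ← hstab d' N hdN', map_sum]
    refine Finset.sum_congr rfl ?_
    intro k _
    rw [map_nsmul]
    congr 1
    exact glim_push F A (e k) (leOfHom u.unop)
  exact ⟨⟨s0, hmem⟩, fun d N hN => (hstab d N hN).symm⟩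

end sum
end
end S16
namespace S16
open Opposite
open scoped Classical
noncomputable section
set_option linter.unusedSectionVars false
variable {T : Type u} [PartialOrder T] {F : Tᵒᵖ ⥤ Pointed.{w}}
variable {A : Type u_1} [AddCommGroup A]

lemma glim_coord_nsmul (m : ℕ) (g : ↥(glim F A)) (d : Tᵒᵖ) :
    (m • g).1 d = m • (g.1 d) := map_nsmul (coordHom F A d) m g

lemma glim_coord_sub (g h : ↥(glim F A)) (d : Tᵒᵖ) :
    (g - h).1 d = g.1 d - h.1 d := map_sub (coordHom F A d) g h

lemma glim_coord_add (g h : ↥(glim F A)) (d : Tᵒᵖ) :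
    (g + h).1 d = g.1 d + h.1 d := rfl

variable [IsDirected T (· ≤ ·)] [Nonempty T] [Countable T]

theorem part1 (hML : MittagLeffler F) :
    Cotorsion (↥(glim F A) ⧸ (rho F A).range) := by
  intro a
  set mkQ := QuotientAddGroup.mk' (rho F A).range with hmkQ
  have lift : ∀ n, ∃ g : ↥(glim F A), mkQ g = a n :=
    fun n => QuotientAddGroup.mk'_surjective _ (a n)
  set Ag : ℕ → ↥(glim F A) := fun n => (lift n).choose with hAgdef
  have hAg : ∀ n, mkQ (Ag n) = a n := fun n => (lift n).choose_spec
  set fm : ℕ → ↥(Smash (plim F) (plimPt F) A) :=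
    fun n => (dmatch hML (Ag n) n).choose with hfmdef
  have hfm : ∀ n (d : Tᵒᵖ), unop d ≤ chain T n →
      (rho F A (fm n)).1 d = (Ag n).1 d :=
    fun n => (dmatch hML (Ag n) n).choose_spec.2
  set A' : ℕ → ↥(glim F A) := fun n => Ag n - rho F A (fm n) with hA'def
  have hA'0 : ∀ k (d : Tᵒᵖ), unop d ≤ chain T k → (A' k).1 d = 0 := by
    intro k d hd'
    show (Ag k - rho F A (fm k)).1 d = 0
    rw [glim_coord_sub, hfm k d hd', sub_self]
  set cc : ℕ → ℕ → ℕ := fun n k => ∏ j ∈ Finset.Ico (n + 1) (k + 1), j with hccdef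
  have hcc1 : ∀ n, cc n n = 1 := by intro n; simp [cc]
  have hcc2 : ∀ n k, n + 1 ≤ k → cc n k = (n + 1) * cc (n + 1) k := by
    intro n k h
    exact Finset.prod_eq_prod_Ico_succ_bot (Nat.succ_lt_succ h) id
  set co : ℕ → ℕ → ℕ := fun n k => if k < n then 0 else cc n k with hcodef
  set xg : ℕ → ↥(glim F A) := fun n => (sumG_exists A' (co n) hA'0).choose with hxgdef
  have hxg : ∀ n (d : Tᵒᵖ) (N : ℕ), unop d ≤ chain T N →
      (xg n).1 d = ∑ k ∈ Finset.range N, co n k • (A' k).1 d :=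
    fun n => (sumG_exists A' (co n) hA'0).choose_spec
  have key : ∀ n, xg n - (n + 1) • xg (n + 1) = A' n := by
    intro n
    apply Subtype.ext
    funext d
    set N := max (lev T (unop d)) (n + 2) with hN
    have hdN : unop d ≤ chain T N :=
      (lev_spec T (unop d)).trans (chain_mono T (le_max_left _ _))
    have hc1 : (xg n - (n + 1) • xg (n + 1)).1 d
        = (xg n).1 d - (n + 1) • (xg (n + 1)).1 d := by
      rw [glim_coord_sub, glim_coord_nsmul]
    have goal2 : (xg n).1 d - (n + 1) • (xg (n + 1)).1 d = (A' n).1 d := by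
      rw [hxg n d N hdN, hxg (n + 1) d N hdN, Finset.smul_sum, ← Finset.sum_sub_distrib]
      rw [Finset.sum_eq_single_of_mem n
        (Finset.mem_range.mpr (lt_of_lt_of_le (by omega) (le_max_right _ _))) ?side]
      · have e1 : co n n = 1 := by simp [co, hcc1]
        have e2 : co (n + 1) n = 0 := by simp [co]
        simp [e1, e2]
      case side =>
        intro k _ hk
        rcases lt_or_gt_of_ne hk with hlt | hgt
        · have e1 : co n k = 0 := by simp [co, hlt]
          have e2 : co (n + 1) k = 0 := by simp [co, hlt.trans (Nat.lt_succ_self n)]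
          simp [e1, e2]
        · have e1 : co n k = cc n k := by simp [co, Nat.not_lt.mpr (le_of_lt hgt)]
          have e2 : co (n + 1) k = cc (n + 1) k := by simp [co, Nat.not_lt.mpr hgt]
          rw [e1, e2, smul_smul, ← hcc2 n k hgt, sub_self]
    exact hc1.trans goal2
  refine ⟨fun n => mkQ (xg n), ?_⟩
  intro n
  rw [← map_nsmul mkQ (n + 1) (xg (n + 1)), ← map_sub mkQ, key n]
  show mkQ (Ag n - rho F A (fm n)) = a n
  rw [map_sub mkQ, hAg n]
  have hz : mkQ (rho F A (fm n)) = 0 :=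
    (QuotientAddGroup.eq_zero_iff _).mpr ⟨fm n, rfl⟩
  rw [hz, sub_zero]
end
end S16
namespace S16
open Opposite
open scoped Classical
noncomputable section
set_option linter.unusedSectionVars false
variable {T : Type u} [PartialOrder T] {F : Tᵒᵖ ⥤ Pointed.{w}}
variable {A : Type u_1} [AddCommGroup A]
variable [IsDirected T (· ≤ ·)] [Nonempty T] [Countable T]

theorem step_lemma (hML : MittagLeffler F) (p k : ℕ) (w : ↥(glim F A))
    (hT : ∀ n : ℕ, ∃ (h : ↥(glim F A)) (f : ↥(Smash (plim F) (plimPt F) A)),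
      w = p ^ n • h + rho F A f)
    (hD : ∀ (d : Tᵒᵖ) (y : (F.obj d).X), ((w.1 d).1 : _ →₀ A) y ∈ P A p k) :
    ∃ w' : ↥(glim F A),
      ((∀ n : ℕ, ∃ h f, w' = p ^ n • h + rho F A f) ∧
       (∀ (d : Tᵒᵖ) (y : (F.obj d).X), ((w'.1 d).1 : _ →₀ A) y ∈ P A p (k + 1)) ∧
       (∀ d : Tᵒᵖ, unop d ≤ chain T (k + 1) → w'.1 d = 0)) ∧
      ∃ fe : ↥(Smash (plim F) (plimPt F) A),
        w - w' = rho F A fe ∧ (∀ x, (fe.1 : _ →₀ A) x ∈ P A p k) := by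
  obtain ⟨h, f, hwf⟩ := hT (k + 1)
  obtain ⟨m, hm⟩ := coeff_exists f
  have hrfval : rho F A f = w - p ^ (k + 1) • h := by rw [hwf]; abel
  have hfP : ∀ x, (f.1 : _ →₀ A) x ∈ P A p k := by
    intro x
    by_cases hx : x ∈ (f.1 : _ →₀ A).support
    · rw [hm x hx, hrfval, glim_coord_sub, smash_val_sub, glim_coord_nsmul, smash_val_nsmul]
      refine sub_mem (hD _ _) ?_
      rw [pow_succ, mul_smul]
      exact smul_mem_P A p k _
    · rw [Finsupp.notMem_support_iff.mp hx]
      exact zero_mem _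
  set v : ↥(glim F A) := p ^ (k + 1) • h with hv
  have hvD : ∀ (d : Tᵒᵖ) (y : (F.obj d).X), ((v.1 d).1 : _ →₀ A) y ∈ P A p (k + 1) := by
    intro d y
    rw [hv, glim_coord_nsmul, smash_val_nsmul]
    exact smul_mem_P A p (k + 1) _
  obtain ⟨fd, hfd_coeff, hfd_match⟩ := dmatch hML v (k + 1)
  have hfdP : ∀ x, (fd.1 : _ →₀ A) x ∈ P A p (k + 1) := by
    intro x
    rcases hfd_coeff x with h0 | ⟨y, hy⟩
    · rw [h0]; exact zero_mem _
    · rw [hy]; exact hvD _ y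
  refine ⟨v - rho F A fd, ⟨?_, ?_, ?_⟩, f + fd, ?_, ?_⟩
  · intro n
    obtain ⟨h', f', hwf'⟩ := hT n
    refine ⟨h', f' - f - fd, ?_⟩
    rw [map_sub, map_sub]
    rw [show p ^ n • h' = w - rho F A f' from by rw [hwf']; abel]
    rw [hwf]
    abel
  · intro d y
    rw [glim_coord_sub, smash_val_sub]
    exact sub_mem (hvD d y) (rho_val_mem fd _ hfdP d y)
  · intro d hd
    rw [glim_coord_sub, hfd_match d hd, sub_self]
  · rw [map_add, hwf, hv]
    abel
  · intro x
    rw [smash_val_add]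
    exact add_mem (hfP x) (P_mono A p (Nat.le_succ k) (hfdP x))

theorem post_lemma (hML : MittagLeffler F) (p k : ℕ)
    (fe : ↥(Smash (plim F) (plimPt F) A))
    (hco : ∀ x, (fe.1 : _ →₀ A) x ∈ P A p k)
    (hvan : ∀ d : Tᵒᵖ, unop d ≤ chain T k → (rho F A fe).1 d = 0) :
    ∃ ehat : ↥(glim F A), ehat ∈ (rho F A).range ∧
      p ^ k • ehat = rho F A fe ∧
      (∀ d : Tᵒᵖ, unop d ≤ chain T k → ehat.1 d = 0) := by
  obtain ⟨f1, hf1⟩ := exists_div p k fe hco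
  have hkey : p ^ k • rho F A f1 = rho F A fe := by
    rw [← hf1, map_nsmul]
  obtain ⟨ftau, htau_coeff, htau_match⟩ := dmatch hML (rho F A f1) k
  have htau_tor : p ^ k • ftau = 0 := by
    apply Subtype.ext
    apply Finsupp.ext
    intro x
    rw [show (((0 : ↥(Smash (plim F) (plimPt F) A))).1 : _ →₀ A) x = 0 from rfl]
    rw [smash_val_nsmul]
    rcases htau_coeff x with h0 | ⟨y, hy⟩
    · rw [h0, smul_zero]
    · rw [hy]
      have hval : ((p ^ k • rho F A f1).1 (op (chain T k))).1 y
          = p ^ k • (((rho F A f1).1 (op (chain T k))).1 y) := by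
        rw [glim_coord_nsmul, smash_val_nsmul]
      rw [← hval, hkey, hvan (op (chain T k)) (le_refl _)]
      rfl
  refine ⟨rho F A f1 - rho F A ftau, ⟨f1 - ftau, by rw [map_sub]⟩, ?_, ?_⟩
  · rw [smul_sub, ← map_nsmul (rho F A) (p ^ k) ftau, htau_tor, map_zero, sub_zero, hkey]
  · intro d hd
    rw [glim_coord_sub, htau_match d hd, sub_self]
end
end S16
namespace S16
open Opposite
open scoped Classical
noncomputable section
set_option linter.unusedSectionVars false
variable {T : Type u} [PartialOrder T] {F : Tᵒᵖ ⥤ Pointed.{w}}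
variable {A : Type u_1} [AddCommGroup A]
variable [IsDirected T (· ≤ ·)] [Nonempty T] [Countable T]

set_option maxHeartbeats 2000000 in
theorem part2 (hML : MittagLeffler F) (p : ℕ) :
    (fun y : ↥(glim F A) ⧸ (rho F A).range => p • y) ''
        (⋂ n : ℕ, Set.range fun y : ↥(glim F A) ⧸ (rho F A).range => p ^ n • y)
      = ⋂ n : ℕ, Set.range fun y : ↥(glim F A) ⧸ (rho F A).range => p ^ n • y := by
  apply Set.Subset.antisymm
  · rintro _ ⟨y, hy, rfl⟩
    apply Set.mem_iInter.mpr
    intro n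
    obtain ⟨z, hz⟩ := Set.mem_iInter.mp hy n
    refine ⟨p • z, ?_⟩
    show p ^ n • (p • z) = p • y
    rw [← hz]
    show p ^ n • p • z = p • p ^ n • z
    rw [smul_smul, smul_smul, mul_comm]
  · intro yq hyq
    obtain ⟨g, rfl⟩ := QuotientAddGroup.mk'_surjective (rho F A).range yq
    set mkQ := QuotientAddGroup.mk' (rho F A).range with hmkQ
    have hTg : ∀ n : ℕ, ∃ (h : ↥(glim F A)) (f : ↥(Smash (plim F) (plimPt F) A)),
        g = p ^ n • h + rho F A f := by
      intro n
      obtain ⟨z, hz⟩ := Set.mem_iInter.mp hyq n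
      obtain ⟨h, rfl⟩ := QuotientAddGroup.mk'_surjective (rho F A).range z
      change p ^ n • mkQ h = mkQ g at hz
      have h0 : mkQ (g - p ^ n • h) = 0 := by
        rw [map_sub, map_nsmul, hz, sub_self]
      have hmem : g - p ^ n • h ∈ (rho F A).range :=
        (QuotientAddGroup.eq_zero_iff _).mp h0
      obtain ⟨f, hf⟩ := hmem
      exact ⟨h, f, by rw [hf]; abel⟩
    have hD0 : ∀ (d : Tᵒᵖ) (y : (F.obj d).X), ((g.1 d).1 : _ →₀ A) y ∈ P A p 0 :=
      fun d y => ⟨((g.1 d).1 : _ →₀ A) y, by simp⟩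
    -- the recursive sequence
    let Bd : ℕ → Type _ := fun k => {w : ↥(glim F A) //
      (∀ n : ℕ, ∃ h f, w = p ^ n • h + rho F A f) ∧
      (∀ (d : Tᵒᵖ) (y : (F.obj d).X), ((w.1 d).1 : _ →₀ A) y ∈ P A p (k + 1)) ∧
      (∀ d : Tᵒᵖ, unop d ≤ chain T (k + 1) → w.1 d = 0)}
    let W : ∀ k : ℕ, Bd k := fun k => Nat.rec
      (⟨(step_lemma hML p 0 g hTg hD0).choose, (step_lemma hML p 0 g hTg hD0).choose_spec.1⟩)
      (fun k prev => ⟨(step_lemma hML p (k + 1) prev.1 prev.2.1 prev.2.2.1).choose,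
        (step_lemma hML p (k + 1) prev.1 prev.2.1 prev.2.2.1).choose_spec.1⟩) k
    let ws : ℕ → ↥(glim F A) := fun k => Nat.rec g (fun k _ => (W k).1) k
    have hVn : ∀ k, 1 ≤ k → ∀ d : Tᵒᵖ, unop d ≤ chain T k → ((ws k).1 d) = 0 := by
      intro k hk
      cases k with
      | zero => omega
      | succ k => exact (W k).2.2.2
    have hconn : ∀ k, ∃ fe : ↥(Smash (plim F) (plimPt F) A),
        ws k - ws (k + 1) = rho F A fe ∧ (∀ x, (fe.1 : _ →₀ A) x ∈ P A p k) := by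
      intro k
      cases k with
      | zero => exact (step_lemma hML p 0 g hTg hD0).choose_spec.2
      | succ k =>
          exact (step_lemma hML p (k + 1) (W k).1 (W k).2.1 (W k).2.2.1).choose_spec.2
    choose fe hfe1 hfe2 using hconn
    have hpostAll : ∀ k, ∃ ehat : ↥(glim F A), ehat ∈ (rho F A).range ∧
        (1 ≤ k → p ^ k • ehat = ws k - ws (k + 1)) ∧
        (∀ d : Tᵒᵖ, unop d ≤ chain T k → ehat.1 d = 0) := by
      intro k
      cases Nat.eq_zero_or_pos k with
      | inl h0 =>
          refine ⟨0, zero_mem _, ?_, ?_⟩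
          · intro h1; omega
          · intro d _; rfl
      | inr hk =>
          have hvan : ∀ d : Tᵒᵖ, unop d ≤ chain T k → (rho F A (fe k)).1 d = 0 := by
            intro d hd
            rw [← hfe1 k, glim_coord_sub, hVn k hk d hd,
              hVn (k + 1) (by omega) d (hd.trans (chain_mono T (Nat.le_succ k))), sub_self]
          obtain ⟨ehat, hr, hdiv, hvn⟩ := post_lemma hML p k (fe k) (hfe2 k) hvan
          exact ⟨ehat, hr, fun _ => by rw [hdiv, ← hfe1 k], hvn⟩
    choose eh heh_range heh_div heh0 using hpostAll
    obtain ⟨sg, hsg⟩ := sumG_exists eh (fun k => if k = 0 then 0 else p ^ (k - 1)) heh0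
    have hmain : p • sg = ws 1 := by
      apply Subtype.ext
      funext d
      set M := max (lev T (unop d)) 1 with hM
      have hdM1 : unop d ≤ chain T (M + 1) :=
        (lev_spec T (unop d)).trans (chain_mono T (by omega))
      rw [glim_coord_nsmul, hsg d (M + 1) hdM1, Finset.smul_sum]
      rw [Finset.sum_range_succ'
        (fun k => p • ((if k = 0 then 0 else p ^ (k - 1)) • (eh k).1 d)) M]
      have hzero : p • ((if (0:ℕ) = 0 then 0 else p ^ (0 - 1)) • (eh 0).1 d) = 0 := by
        simp
      rw [hzero, add_zero]
      have hterm : ∀ i, p • ((if i + 1 = 0 then 0 else p ^ (i + 1 - 1)) • (eh (i + 1)).1 d)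
          = ((ws (i + 1)).1 d) - ((ws (i + 2)).1 d) := by
        intro i
        rw [if_neg (Nat.succ_ne_zero i), Nat.add_sub_cancel, smul_smul, ← pow_succ']
        rw [← glim_coord_nsmul, heh_div (i + 1) (by omega), glim_coord_sub]
      rw [Finset.sum_congr rfl (fun i _ => hterm i)]
      rw [Finset.sum_range_sub' (fun i => (ws (i + 1)).1 d) M]
      rw [hVn (M + 1) (by omega) d hdM1, sub_zero]
      norm_num
    have hmem : ∀ n : ℕ, ∃ z : ↥(glim F A) ⧸ (rho F A).range, p ^ n • z = mkQ sg := by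
      intro n
      obtain ⟨Sn, hSn⟩ := sumG_exists eh (fun k => if k ≤ n then 0 else p ^ (k - 1 - n)) heh0
      set E : ↥(glim F A) := ∑ k ∈ Finset.range (n + 1),
        (if k = 0 then 0 else p ^ (k - 1)) • eh k with hE
      have hErange : E ∈ (rho F A).range := by
        refine sum_mem ?_
        intro k _
        exact nsmul_mem (heh_range k) _
      have hsplit : sg = E + p ^ n • Sn := by
        apply Subtype.ext
        funext d
        set N := max (lev T (unop d)) (n + 1) with hN
        have hdN : unop d ≤ chain T N :=
          (lev_spec T (unop d)).trans (chain_mono T (le_max_left _ _))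
        have hEc : E.1 d = ∑ k ∈ Finset.range (n + 1),
            (if k = 0 then 0 else p ^ (k - 1)) • (eh k).1 d := by
          rw [show E.1 d = coordHom F A d E from rfl, hE, map_sum]
          refine Finset.sum_congr rfl ?_
          intro k _
          rw [map_nsmul]
          rfl
        rw [glim_coord_add, glim_coord_nsmul, hsg d N hdN, hSn d N hdN, hEc, Finset.smul_sum]
        have hsplit_term : ∀ k ∈ Finset.range N,
            (if k = 0 then 0 else p ^ (k - 1)) • (eh k).1 d
              = (if k ≤ n then (if k = 0 then 0 else p ^ (k - 1)) • (eh k).1 d else 0)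
                + p ^ n • ((if k ≤ n then 0 else p ^ (k - 1 - n)) • (eh k).1 d) := by
          intro k _
          by_cases hk : k ≤ n
          · rw [if_pos hk, if_pos hk, zero_smul, smul_zero, add_zero]
          · rw [if_neg hk, if_neg hk, zero_add]
            have hk0 : k ≠ 0 := by omega
            rw [if_neg hk0, smul_smul, ← pow_add,
              show n + (k - 1 - n) = k - 1 from by omega]
        rw [Finset.sum_congr rfl hsplit_term, Finset.sum_add_distrib]
        congr 1
        rw [← Finset.sum_subset (Finset.range_subset_range.mpr (le_max_right (lev T (unop d)) (n + 1)))
          ?van]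
        case van =>
          intro k _ hk
          rw [Finset.mem_range, not_lt] at hk
          rw [if_neg (by omega)]
        refine Finset.sum_congr rfl ?_
        intro k hk
        rw [Finset.mem_range] at hk
        rw [if_pos (by omega)]
      refine ⟨mkQ Sn, ?_⟩
      rw [← map_nsmul mkQ (p ^ n) Sn, ← zero_add (mkQ (p ^ n • Sn)),
        ← (QuotientAddGroup.eq_zero_iff E).mpr hErange]
      show mkQ E + mkQ (p ^ n • Sn) = mkQ sg
      rw [← map_add, ← hsplit]
    refine ⟨mkQ sg, Set.mem_iInter.mpr (fun n => hmem n), ?_⟩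
    show p • mkQ sg = mkQ g
    have hg1 : mkQ g - mkQ (ws 1) = 0 := by
      rw [← map_sub, show g - ws 1 = rho F A (fe 0) from hfe1 0]
      exact (QuotientAddGroup.eq_zero_iff _).mpr ⟨fe 0, rfl⟩
    rw [← map_nsmul mkQ p sg, hmain]
    exact (sub_eq_zero.mp hg1).symm
end
end S16
/-- Let `A` be an abelian group, `T` a *countable* directed poset and
`F : Tᵒᵖ ⥤ Set_*` a diagram of pointed sets satisfying the Mittag-Leffler condition.
Then the cokernel `H(X,A)` of the natural map `ρ` is algebraically compact;
explicitly, `H(X,A)` is cotorsion and, for every prime `p`, the subgroup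
`⋂_{n} pⁿ·H(X,A)` is `p`-divisible, i.e. `p · (⋂_n pⁿ·H(X,A)) = ⋂_n pⁿ·H(X,A)`. -/
theorem stmt16 {T : Type u} [PartialOrder T] [IsDirected T (· ≤ ·)] [Nonempty T]
    [Countable T] (F : Tᵒᵖ ⥤ Pointed.{w}) {A : Type*} [AddCommGroup A]
    (hML : MittagLeffler F) :
    Cotorsion (↥(glim F A) ⧸ (rho F A).range) ∧
      ∀ p : ℕ, p.Prime →
        (fun y : ↥(glim F A) ⧸ (rho F A).range => p • y) ''
            (⋂ n : ℕ, Set.range fun y : ↥(glim F A) ⧸ (rho F A).range => p ^ n • y)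
          = ⋂ n : ℕ, Set.range fun y : ↥(glim F A) ⧸ (rho F A).range => p ^ n • y := by
  constructor
  · exact S16.part1 hML
  · intro p _
    exact S16.part2 hML p
end

section
/- Let A be an abelian group, λ an ordinal regarded as a directed poset, and X : λ → Set_* a diagram of pointed sets satisfying the Mittag-Leffler condition. Then the cokernel H(X,A) of the natural map ρ is algebraically compact; explicitly, H(X,A) is cotorsion and for every prime p the subgroup ⋂_{n∈ℕ} pⁿ·H(X,A) is p-divisible. -/
open CategoryTheory Finsupp

universe u v w

section Abstract

variable {L : Type*} [AddCommGroup L] (D : AddSubgroup L)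

/-- Falling factorial `k!/n!`. -/
def ffac (n k : ℕ) : ℕ := ∏ i ∈ Finset.Ico n k, (i + 1)

theorem ffac_self (n : ℕ) : ffac n n = 1 := by simp [ffac]

theorem ffac_succ (n k : ℕ) : ffac n (n + (k+1)) = (n + 1) * ffac (n+1) ((n+1) + k) := by
  have h : n < n + (k+1) := by omega
  have e : (n+1) + k = n + (k+1) := by omega
  rw [e, ffac, Finset.prod_eq_prod_Ico_succ_bot h]
  rfl

/-- An interface packaging completeness/density/purity data for `L` relative to `D`. -/
structure Pack {L : Type*} [AddCommGroup L] (D : AddSubgroup L) where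
  W : ℕ → AddSubgroup L
  Sum : (ℕ → L) → L
  hW : ∀ {n m : ℕ}, n ≤ m → W m ≤ W n
  hSum1 : ∀ ε : ℕ → L, (∀ N, ε N ∈ W N) → Sum ε = ε 0 + Sum (fun N => ε (N+1))
  hSum2 : ∀ (m : ℕ) (ε : ℕ → L), (∀ N, ε N ∈ W N) →
    Sum (fun N => m • ε N) = m • Sum ε
  hDense : ∀ (h : L) (n : ℕ), ∃ d ∈ D, h - d ∈ W n
  hTD : ∀ (h : L) (n q : ℕ), q • h = 0 → ∃ d ∈ D, q • d = 0 ∧ h - d ∈ W n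
  hPure : ∀ (q : ℕ) (d : L), d ∈ D → (∃ y : L, d = q • y) → ∃ v ∈ D, d = q • v

variable {D}

theorem Pack.cotorsion (P : Pack D) : Cotorsion (L ⧸ D) := by
  classical
  intro a
  have hsur := QuotientAddGroup.mk'_surjective D
  choose ha hha using fun n => hsur (a n)
  choose d hd hbd using fun n => P.hDense (ha n) n
  set b : ℕ → L := fun n => ha n - d n with hbdef
  set ε : ℕ → ℕ → L := fun n k => ffac n (n + k) • b (n + k) with hεdef
  have hεW : ∀ n k, ε n k ∈ P.W k := by
    intro n k
    exact P.hW (Nat.le_add_left k n) (AddSubgroup.nsmul_mem _ (hbd (n+k)) _)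
  set x : ℕ → L := fun n => P.Sum (ε n) with hxdef
  have hrec : ∀ n, x n = b n + (n+1) • x (n+1) := by
    intro n
    have h1 : x n = ε n 0 + P.Sum (fun k => ε n (k+1)) := P.hSum1 (ε n) (hεW n)
    have h2 : (fun k => ε n (k+1)) = fun k => (n+1) • ε (n+1) k := by
      funext k
      show ffac n (n + (k+1)) • b (n + (k+1)) = (n+1) • (ffac (n+1) ((n+1) + k) • b ((n+1) + k))
      rw [ffac_succ, mul_smul, show n + (k+1) = (n+1) + k from by omega]
    have h3 : P.Sum (fun k => (n+1) • ε (n+1) k) = (n+1) • P.Sum (ε (n+1)) :=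
      P.hSum2 (n+1) (ε (n+1)) (hεW (n+1))
    rw [h1, h2, h3]
    have : ε n 0 = b n := by
      show ffac n (n + 0) • b (n + 0) = b n
      simp [ffac_self]
    rw [this]
  have hmk0 : ∀ w ∈ D, QuotientAddGroup.mk' D w = 0 := fun w hw => (QuotientAddGroup.eq_zero_iff w).2 hw
  refine ⟨fun n => QuotientAddGroup.mk' D (x n), fun n => ?_⟩
  have hx : x n - (n+1) • x (n+1) = b n := by rw [hrec n]; abel
  calc QuotientAddGroup.mk' D (x n) - (n + 1) • QuotientAddGroup.mk' D (x (n+1))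
      = QuotientAddGroup.mk' D (x n - (n+1) • x (n+1)) := by
        rw [map_sub, map_nsmul]
    _ = QuotientAddGroup.mk' D (ha n) - QuotientAddGroup.mk' D (d n) := by
        rw [hx, hbdef, map_sub]
    _ = a n := by
        rw [hha n, hmk0 _ (hd n), sub_zero]

theorem Pack.pdiv (P : Pack D) (p : ℕ) :
    (fun y : L ⧸ D => p • y) '' (⋂ n : ℕ, Set.range fun y : L ⧸ D => p ^ n • y)
      = ⋂ n : ℕ, Set.range fun y : L ⧸ D => p ^ n • y := by
  classical
  apply Set.Subset.antisymm
  · rintro _ ⟨y, hy, rfl⟩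
    simp only [Set.mem_iInter, Set.mem_range] at hy ⊢
    intro n
    obtain ⟨z, hz⟩ := hy n
    exact ⟨p • z, by rw [← hz, smul_comm]⟩
  · intro c hc
    simp only [Set.mem_iInter, Set.mem_range] at hc
    have hsur := QuotientAddGroup.mk'_surjective D
    obtain ⟨chat, hchat⟩ := hsur c
    have hraw : ∀ n : ℕ, ∃ y : L, ∃ d ∈ D, chat = p ^ n • y + d := by
      intro n
      obtain ⟨z, hz⟩ := hc n
      obtain ⟨zhat, hzhat⟩ := hsur z
      have h0 : QuotientAddGroup.mk' D (chat - p ^ n • zhat) = 0 := by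
        rw [map_sub, map_nsmul, hzhat, hchat, hz, sub_self]
      exact ⟨zhat, chat - p ^ n • zhat, (QuotientAddGroup.eq_zero_iff _).1 h0, by abel⟩
    choose yraw draw hdraw hceq using hraw
    set y : ℕ → L := fun n => if n = 0 then chat else yraw n with hydef
    set d : ℕ → L := fun n => if n = 0 then 0 else draw n with hddef
    have hdD : ∀ n, d n ∈ D := by
      intro n; by_cases h : n = 0 <;> simp [hddef, h, AddSubgroup.zero_mem, hdraw n]
    have hceq' : ∀ n, chat = p ^ n • y n + d n := by
      intro n; by_cases h : n = 0
      · simp [hydef, hddef, h]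
      · simp [hydef, hddef, h, hceq n]
    have key : ∀ n : ℕ, ∃ v ∈ D, ∃ εn : L,
        y n = p • y (n+1) + v + εn ∧ p ^ n • εn = 0 ∧ εn ∈ P.W n := by
      intro n
      have e1 : d n = chat - p ^ n • y n := by rw [hceq' n]; abel
      have e2 : d (n+1) = chat - p ^ (n+1) • y (n+1) := by rw [hceq' (n+1)]; abel
      have hdiff : d (n+1) - d n = p ^ n • (y n - p • y (n+1)) := by
        rw [e1, e2, pow_succ, mul_smul, smul_sub]; abel
      have hmem : d (n+1) - d n ∈ D := AddSubgroup.sub_mem D (hdD (n+1)) (hdD n)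
      obtain ⟨v, hvD, hv⟩ := P.hPure (p ^ n) (d (n+1) - d n) hmem ⟨_, hdiff⟩
      set τ : L := y n - p • y (n+1) - v with hτdef
      have hτ : p ^ n • τ = 0 := by
        rw [hτdef, smul_sub, ← hdiff, hv, sub_self]
      obtain ⟨u, huD, hu0, huW⟩ := P.hTD τ n (p ^ n) hτ
      refine ⟨v + u, AddSubgroup.add_mem D hvD huD, τ - u, by rw [hτdef]; abel,
        by rw [smul_sub, hτ, hu0, sub_self], huW⟩
    choose v hvD ε hyrec hε0 hεW using key
    have hzmem : ∀ j N, p ^ N • ε (j + N) ∈ P.W N :=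
      fun j N => P.hW (Nat.le_add_left N j) (AddSubgroup.nsmul_mem _ (hεW (j+N)) _)
    set z : ℕ → L := fun j => P.Sum (fun N => p ^ N • ε (j + N)) with hzdef
    have hzrec : ∀ j, z j = ε j + p • z (j+1) := by
      intro j
      have h1 : z j = ε j + P.Sum (fun N => p ^ (N+1) • ε (j + (N+1))) := by
        simpa using P.hSum1 (fun N => p ^ N • ε (j + N)) (hzmem j)
      have h2 : (fun N => p ^ (N+1) • ε (j + (N+1))) = fun N => p • (p ^ N • ε ((j+1) + N)) := by
        funext N
        rw [pow_succ, mul_comm, mul_smul, show j + (N+1) = (j+1) + N from by omega]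
      have h3 : P.Sum (fun N => p • (p ^ N • ε ((j+1) + N))) = p • z (j+1) :=
        P.hSum2 p _ (hzmem (j+1))
      rw [h1, h2, h3]
    set dh : ℕ → L := fun j => y j - z j with hdhdef
    have hdh : ∀ j, dh j = p • dh (j+1) + v j := by
      intro j
      show y j - z j = p • (y (j+1) - z (j+1)) + v j
      rw [smul_sub]
      nth_rewrite 1 [hyrec j]
      rw [hzrec j]
      abel
    have hmk0 : ∀ w ∈ D, QuotientAddGroup.mk' D w = 0 := fun w hw => (QuotientAddGroup.eq_zero_iff w).2 hw
    set mk := QuotientAddGroup.mk' D with hmkdef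
    have hdhq : ∀ j, mk (dh j) = p • mk (dh (j+1)) := by
      intro j
      rw [hdh j, map_add, map_nsmul, hmk0 _ (hvD j), add_zero]
    have htower : ∀ n, mk (dh 1) = p ^ n • mk (dh (n+1)) := by
      intro n
      induction n with
      | zero => simp
      | succ n ih =>
        rw [ih, hdhq (n+1), smul_smul, ← pow_succ]
    -- p • z 1 = 0
    have hz1 : p • z 1 = 0 := by
      have h3 : P.Sum (fun N => p • (p ^ N • ε (1 + N))) = p • z 1 :=
        P.hSum2 p _ (hzmem 1)
      have h4 : (fun N => p • (p ^ N • ε (1 + N))) = fun _ => (0:L) := by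
        funext N
        rw [smul_smul, ← pow_succ', show N + 1 = 1 + N from by omega, hε0 (1+N)]
      have h5 : P.Sum (fun _ => (0:L)) = 0 := by
        have := P.hSum2 0 (fun _ => (0:L)) (fun N => (P.W N).zero_mem)
        simpa using this
      rw [← h3, h4, h5]
    have hε00 : ε 0 = 0 := by
      have := hε0 0
      simpa using this
    have hchat0 : chat = p • y 1 + v 0 := by
      have h := hyrec 0
      have hy0 : y 0 = chat := by simp [hydef]
      rw [hy0, hε00, add_zero] at h
      exact h
    have hfin : c = p • mk (dh 1) := by
      have hy1 : y 1 = dh 1 + z 1 := by show y 1 = (y 1 - z 1) + z 1; abel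
      calc c = mk chat := hchat.symm
        _ = p • mk (y 1) + mk (v 0) := by rw [hchat0, map_add, map_nsmul]
        _ = p • mk (y 1) := by
            rw [hmk0 _ (hvD 0), add_zero]
        _ = p • mk (dh 1) + p • mk (z 1) := by
            rw [hy1, map_add, smul_add]
        _ = p • mk (dh 1) := by
            have hzz : p • mk (z 1) = 0 := by rw [← map_nsmul, hz1, map_zero]
            rw [hzz, add_zero]
    refine ⟨mk (dh 1), ?_, hfin.symm⟩
    simp only [Set.mem_iInter, Set.mem_range]
    intro n
    exact ⟨mk (dh (n+1)), (htower n).symm⟩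

end Abstract

section Concrete

variable {lambda : Ordinal.{u}} (F : (lambda.ToType)ᵒᵖ ⥤ Pointed.{w})
  {A : Type v} [AddCommGroup A]

open Opposite

/-- The transition map of the diagram, for `t ≤ s`. -/
noncomputable def fmap {t s : lambda.ToType} (h : t ≤ s) :
    (F.obj (op s)).X → (F.obj (op t)).X :=
  (F.map (homOfLE h).op).toFun

theorem fmap_pt {t s : lambda.ToType} (h : t ≤ s) :
    fmap F h (F.obj (op s)).point = (F.obj (op t)).point :=
  (F.map (homOfLE h).op).map_point

theorem fmap_id {s : lambda.ToType} (x : (F.obj (op s)).X) :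
    fmap F (le_refl s) x = x := by
  have : (homOfLE (le_refl s)).op = 𝟙 (op s) := Subsingleton.elim _ _
  simp only [fmap, this, F.map_id]
  rfl

theorem fmap_comp {t s r : lambda.ToType} (h1 : t ≤ s) (h2 : s ≤ r)
    (x : (F.obj (op r)).X) :
    fmap F h1 (fmap F h2 x) = fmap F (h1.trans h2) x := by
  have : (homOfLE h2).op ≫ (homOfLE h1).op = (homOfLE (h1.trans h2)).op :=
    Subsingleton.elim _ _
  simp only [fmap, ← this, F.map_comp]
  rfl

theorem map_eq_fmap {d d' : (lambda.ToType)ᵒᵖ} (u : d ⟶ d') :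
    (F.map u).toFun = fmap F (leOfHom u.unop) := by
  have : u = (homOfLE (leOfHom u.unop)).op := Subsingleton.elim _ _
  rw [this]
  rfl

/-- The transition maps on smash products. -/
noncomputable def pushf {t s : lambda.ToType} (h : t ≤ s) :
    ↥(Smash (F.obj (op s)).X (F.obj (op s)).point A)
      →+ ↥(Smash (F.obj (op t)).X (F.obj (op t)).point A) :=
  smashMap _ _ (fmap F h) A

theorem glim_push (g : ↥(glim F A)) {t s : lambda.ToType} (h : t ≤ s) :
    pushf F h (g.1 (op s)) = g.1 (op t) :=
  g.2 ((homOfLE h).op)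

theorem plim_push (x : ↥(plim F)) {t s : lambda.ToType} (h : t ≤ s) :
    fmap F h (x.1 (op s)) = x.1 (op t) :=
  x.2 ((homOfLE h).op)

theorem plim_pt_apply (d : (lambda.ToType)ᵒᵖ) :
    (plimPt F).1 d = (F.obj d).point := rfl

/-- If a finitely supported function pushes forward to something nonzero,
some point of its support lies in the fiber. -/
theorem mapDomain_ne_zero {Y : Type*} {Z : Type*} {f : Y →₀ A} {g : Y → Z} {z : Z}
    (h : Finsupp.mapDomain g f z ≠ 0) : ∃ y ∈ f.support, g y = z := by
  classical
  by_contra h'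
  push_neg at h'
  apply h
  rw [Finsupp.mapDomain, Finsupp.sum_apply, Finsupp.sum]
  exact Finset.sum_eq_zero fun a ha => Finsupp.single_eq_of_ne (h' a ha).symm

theorem mapDomain_apply_injOn {Y : Type*} {Z : Type*} (f : Y →₀ A) {g : Y → Z}
    (hg : Set.InjOn g f.support) {x : Y} (hx : x ∈ f.support) :
    Finsupp.mapDomain g f (g x) = f x := by
  classical
  rw [Finsupp.mapDomain, Finsupp.sum_apply]
  rw [Finsupp.sum, Finset.sum_eq_single_of_mem x hx]
  · rw [Finsupp.single_eq_same]
  · intro b hb hbx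
    exact Finsupp.single_eq_of_ne fun e => hbx (hg hb hx e.symm)

theorem erase_eq_self {Y : Type*} {f : Y →₀ A} {y0 : Y} (h : f y0 = 0) :
    f.erase y0 = f := by
  classical
  ext a
  by_cases ha : a = y0
  · subst ha; simp [h]
  · rw [Finsupp.erase_ne ha]

/-- An element of the smash of the inverse limit built from a finite set of
threads with coefficients. -/
noncomputable def buildG (t : Finset ↥(plim F)) (hpt : plimPt F ∉ t)
    (c : ↥(plim F) → A) : ↥(Smash (↥(plim F)) (plimPt F) A) :=
  ⟨∑ x ∈ t, Finsupp.single x (c x), by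
    rw [mem_smash, Finset.sum_apply']
    exact Finset.sum_eq_zero fun x hx =>
      Finsupp.single_eq_of_ne (fun e => hpt (e ▸ hx))⟩

theorem rho_buildG_coe (t : Finset ↥(plim F)) (hpt : plimPt F ∉ t)
    (c : ↥(plim F) → A) (d : (lambda.ToType)ᵒᵖ) :
    (((rho F A (buildG F t hpt c)).1 d : ↥(Smash (F.obj d).X (F.obj d).point A)) : _ →₀ A)
      = (∑ x ∈ t, Finsupp.single (x.1 d) (c x)).erase (F.obj d).point := by
  classical
  show ((Finsupp.mapDomain (fun x : ↥(plim F) => x.1 d)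
      (∑ x ∈ t, Finsupp.single x (c x))).erase (F.obj d).point) = _
  congr 1
  rw [← Finsupp.mapDomain.addMonoidHom_apply, map_sum]
  simp only [Finsupp.mapDomain.addMonoidHom_apply, Finsupp.mapDomain_single]

end Concrete

section Concrete2

variable {lambda : Ordinal.{u}} (F : (lambda.ToType)ᵒᵖ ⥤ Pointed.{w})
  {A : Type v} [AddCommGroup A]

open Opposite

theorem ne_pt_mono (x : ↥(plim F)) {t s : lambda.ToType} (h : t ≤ s)
    (hx : x.1 (op t) ≠ (F.obj (op t)).point) :
    x.1 (op s) ≠ (F.obj (op s)).point := by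
  intro e
  apply hx
  rw [← plim_push F x h, e, fmap_pt]

theorem ne_mono (x y : ↥(plim F)) {t s : lambda.ToType} (h : t ≤ s)
    (hx : x.1 (op t) ≠ y.1 (op t)) :
    x.1 (op s) ≠ y.1 (op s) := by
  intro e
  apply hx
  rw [← plim_push F x h, ← plim_push F y h, e]

theorem exists_ne_level {x y : ↥(plim F)} (h : x ≠ y) :
    ∃ s : lambda.ToType, x.1 (op s) ≠ y.1 (op s) := by
  by_contra h'
  push_neg at h'
  apply h
  apply Subtype.ext
  funext d
  exact h' (unop d)

theorem smash_pt_not_mem_support {Y : Type*} {y0 : Y} (f : ↥(Smash Y y0 A)) :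
    y0 ∉ (f : Y →₀ A).support := by
  rw [Finsupp.mem_support_iff]
  push_neg
  exact f.2

/-- Purity of the image of `ρ`. -/
theorem purity (q : ℕ) (dd : ↥(glim F A)) (hdd : dd ∈ (rho F A).range)
    (hdiv : ∃ y : ↥(glim F A), dd = q • y) :
    ∃ v ∈ (rho F A).range, dd = q • v := by
  classical
  obtain ⟨g, rfl⟩ := hdd
  obtain ⟨y, hy⟩ := hdiv
  by_cases hsupp : (g : ↥(plim F) →₀ A).support = ∅
  · refine ⟨0, AddSubgroup.zero_mem _, ?_⟩
    have : g = 0 := Subtype.ext (Finsupp.support_eq_empty.1 hsupp)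
    rw [this, map_zero, smul_zero]
  · obtain ⟨x₀, hx₀⟩ := Finset.nonempty_iff_ne_empty.2 hsupp
    have hne : ∀ x ∈ (g : ↥(plim F) →₀ A).support, x ≠ plimPt F := by
      intro x hx e
      exact smash_pt_not_mem_support g (e ▸ hx)
    -- a level separating a thread from the basepoint
    have hlev1 : ∀ x ∈ (g : ↥(plim F) →₀ A).support,
        ∃ s : lambda.ToType, x.1 (op s) ≠ (F.obj (op s)).point := by
      intro x hx
      obtain ⟨s, hs⟩ := exists_ne_level F (hne x hx)
      exact ⟨s, by simpa [plim_pt_apply] using hs⟩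
    have hT : Nonempty lambda.ToType := by
      obtain ⟨s, _⟩ := hlev1 x₀ hx₀
      exact ⟨s⟩
    set supp := (g : ↥(plim F) →₀ A).support with hsuppdef
    set lev1 : Finset lambda.ToType :=
      supp.attach.image (fun x => Classical.choose (hlev1 x.1 x.2)) with hlev1def
    set lev2 : Finset lambda.ToType :=
      (supp ×ˢ supp).attach.image
        (fun p => if hp : p.1.1 ≠ p.1.2 then Classical.choose (exists_ne_level F hp)
          else Classical.arbitrary _) with hlev2def
    set levels : Finset lambda.ToType := lev1 ∪ lev2 with hlevels
    have hlevne : levels.Nonempty := by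
      refine Finset.Nonempty.inl ⟨_, Finset.mem_image_of_mem _ (Finset.mem_attach supp ⟨x₀, hx₀⟩)⟩
    set u := levels.max' hlevne with hu
    have hu1 : ∀ x ∈ supp, x.1 (op u) ≠ (F.obj (op u)).point := by
      intro x hx
      have hmem : Classical.choose (hlev1 x hx) ∈ levels :=
        Finset.mem_union_left _
          (Finset.mem_image_of_mem _ (Finset.mem_attach supp ⟨x, hx⟩))
      have h1 : Classical.choose (hlev1 x hx) ≤ u := Finset.le_max' _ _ hmem
      exact ne_pt_mono F x h1 (Classical.choose_spec (hlev1 x hx))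
    have hu2 : Set.InjOn (fun x : ↥(plim F) => x.1 (op u)) supp := by
      intro x hx x' hx' e
      by_contra hxx
      have hpmem : ((x, x') : ↥(plim F) × ↥(plim F)) ∈ supp ×ˢ supp :=
        Finset.mem_product.2 ⟨hx, hx'⟩
      have hmem : (if hp : ((x, x') : ↥(plim F) × ↥(plim F)).1 ≠ (x, x').2
            then Classical.choose (exists_ne_level F hp)
            else Classical.arbitrary _) ∈ levels :=
        Finset.mem_union_right _
          (Finset.mem_image_of_mem _ (Finset.mem_attach _ ⟨(x, x'), hpmem⟩))
      rw [dif_pos hxx] at hmem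
      have h1 : Classical.choose (exists_ne_level F hxx) ≤ u := Finset.le_max' _ _ hmem
      exact ne_mono F x x' h1 (Classical.choose_spec (exists_ne_level F hxx)) e
    -- coefficients
    set c : ↥(plim F) → A := fun x => ((y.1 (op u) : ↥(Smash _ _ A)) : _ →₀ A) (x.1 (op u))
      with hc
    have hcoef : ∀ x ∈ supp, (g : ↥(plim F) →₀ A) x = q • c x := by
      intro x hx
      have e1 : (((rho F A g).1 (op u) : ↥(Smash _ _ A)) : _ →₀ A) (x.1 (op u))
          = (g : ↥(plim F) →₀ A) x := by
        show ((Finsupp.mapDomain (fun x : ↥(plim F) => x.1 (op u))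
          (g : ↥(plim F) →₀ A)).erase (F.obj (op u)).point) (x.1 (op u)) = _
        rw [Finsupp.erase_ne (hu1 x hx)]
        exact mapDomain_apply_injOn (g : ↥(plim F) →₀ A) hu2 hx
      have e2 : (((rho F A g).1 (op u) : ↥(Smash _ _ A)) : _ →₀ A) (x.1 (op u))
          = q • c x := by
        rw [hy]
        rfl
      rw [← e1, e2]
    -- build the divided element
    set g'' := buildG F supp (smash_pt_not_mem_support g) c with hg''
    have hqg : q • g'' = g := by
      apply Subtype.ext
      show q • ∑ x ∈ supp, Finsupp.single x (c x) = (g : ↥(plim F) →₀ A)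
      rw [Finset.smul_sum]
      have : ∀ x ∈ supp, q • Finsupp.single x (c x)
          = Finsupp.single x ((g : ↥(plim F) →₀ A) x) := by
        intro x hx
        rw [Finsupp.smul_single, ← hcoef x hx]
      rw [Finset.sum_congr rfl this]
      exact Finsupp.sum_single _
    refine ⟨rho F A g'', AddMonoidHom.mem_range.2 ⟨g'', rfl⟩, ?_⟩
    rw [← hqg, map_nsmul]

end Concrete2

section Concrete3

variable {lambda : Ordinal.{u}} (F : (lambda.ToType)ᵒᵖ ⥤ Pointed.{w})
  {A : Type v} [AddCommGroup A]

open Opposite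

/-- `y ∈ X(s)` is in the image from every later stage. -/
def Reach (s : lambda.ToType) (y : (F.obj (op s)).X) : Prop :=
  ∀ r (h : s ≤ r), ∃ w, fmap F h w = y

theorem reach_of_mem_support (h : ↥(glim F A)) (s : lambda.ToType)
    (y : (F.obj (op s)).X) (hy : y ∈ ((h.1 (op s) : ↥(Smash _ _ A)) : _ →₀ A).support) :
    Reach F s y := by
  classical
  intro r hr
  have hco := glim_push F h hr
  have hyne : ((h.1 (op s) : ↥(Smash _ _ A)) : _ →₀ A) y ≠ 0 := Finsupp.mem_support_iff.1 hy
  have hypt : y ≠ (F.obj (op s)).point := by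
    intro e; exact hyne (e ▸ (h.1 (op s)).2)
  rw [← hco] at hyne
  have : ((Finsupp.mapDomain (fmap F hr) ((h.1 (op r) : ↥(Smash _ _ A)) : _ →₀ A)).erase
      (F.obj (op s)).point) y ≠ 0 := hyne
  rw [Finsupp.erase_ne hypt] at this
  obtain ⟨w, _, hw⟩ := mapDomain_ne_zero (A := A) this
  exact ⟨w, hw⟩

theorem reach_step (hML : MittagLeffler F) {s : lambda.ToType}
    {y : (F.obj (op s)).X} (hy : Reach F s y) (t : lambda.ToType) (h : s ≤ t) :
    ∃ y', Reach F t y' ∧ fmap F h y' = y := by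
  obtain ⟨s', hts, hstab⟩ := hML t
  obtain ⟨w, hw⟩ := hy s' (h.trans hts)
  refine ⟨fmap F hts w, ?_, by rw [fmap_comp]; exact hw⟩
  intro r hr
  have h1 : fmap F hts w ∈ Set.range (F.map (homOfLE hts).op).toFun := ⟨w, rfl⟩
  rw [hstab (max s' r) (le_max_left _ _)] at h1
  obtain ⟨v, hv⟩ := h1
  refine ⟨fmap F (le_max_right s' r) v, ?_⟩
  rw [fmap_comp]
  exact hv

/-- A chain of compatible lifts along a sequence of levels. -/
noncomputable def chainY (hML : MittagLeffler F) (r : ℕ → lambda.ToType)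
    (hr : ∀ k, r k ≤ r (k+1)) {s0 : lambda.ToType} (h0 : s0 ≤ r 0)
    {y : (F.obj (op s0)).X} (hy : Reach F s0 y) :
    ∀ k, {y' : (F.obj (op (r k))).X // Reach F (r k) y'} :=
  fun k => Nat.rec
    (⟨Classical.choose (reach_step F hML hy (r 0) h0),
      (Classical.choose_spec (reach_step F hML hy (r 0) h0)).1⟩)
    (fun k prev => ⟨Classical.choose (reach_step F hML prev.2 (r (k+1)) (hr k)),
      (Classical.choose_spec (reach_step F hML prev.2 (r (k+1)) (hr k))).1⟩) k

theorem chainY_zero (hML : MittagLeffler F) (r : ℕ → lambda.ToType)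
    (hr : ∀ k, r k ≤ r (k+1)) {s0 : lambda.ToType} (h0 : s0 ≤ r 0)
    {y : (F.obj (op s0)).X} (hy : Reach F s0 y) :
    fmap F h0 (chainY F hML r hr h0 hy 0).1 = y :=
  (Classical.choose_spec (reach_step F hML hy (r 0) h0)).2

theorem chainY_succ (hML : MittagLeffler F) (r : ℕ → lambda.ToType)
    (hr : ∀ k, r k ≤ r (k+1)) {s0 : lambda.ToType} (h0 : s0 ≤ r 0)
    {y : (F.obj (op s0)).X} (hy : Reach F s0 y) (k : ℕ) :
    fmap F (hr k) (chainY F hML r hr h0 hy (k+1)).1 = (chainY F hML r hr h0 hy k).1 :=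
  (Classical.choose_spec
    (reach_step F hML (chainY F hML r hr h0 hy k).2 (r (k+1)) (hr k))).2

/-- A thread through a reachable point, given a countable cofinal chain. -/
noncomputable def chainThread (hML : MittagLeffler F) (t : ℕ → lambda.ToType)
    (hmono : Monotone t) (hcof : ∀ s, ∃ n, s ≤ t n) (s0 : lambda.ToType)
    (y : (F.obj (op s0)).X) (hy : Reach F s0 y) :
    {x : ↥(plim F) // x.1 (op s0) = y} := by
  classical
  set r : ℕ → lambda.ToType := fun k => max s0 (t k) with hrdef
  have hr1 : ∀ k, r k ≤ r (k+1) := fun k => max_le_max le_rfl (hmono (Nat.le_succ k))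
  have hrm : ∀ {k l : ℕ}, k ≤ l → r k ≤ r l := fun h => max_le_max le_rfl (hmono h)
  have h0 : s0 ≤ r 0 := le_max_left _ _
  set Y := chainY F hML r hr1 h0 hy with hY
  have hpush : ∀ k l (h : k ≤ l), fmap F (hrm h) (Y l).1 = (Y k).1 := by
    intro k l h
    induction l, h using Nat.le_induction with
    | base => exact fmap_id F _
    | succ l hl ih =>
      calc fmap F (hrm (Nat.le_succ_of_le hl)) (Y (l+1)).1
          = fmap F (hrm hl) (fmap F (hr1 l) (Y (l+1)).1) := (fmap_comp F _ _ _).symm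
        _ = fmap F (hrm hl) (Y l).1 :=
            congrArg (fmap F (hrm hl)) (chainY_succ F hML r hr1 h0 hy l)
        _ = (Y k).1 := ih
  have ex : ∀ d : (lambda.ToType)ᵒᵖ, ∃ k, unop d ≤ r k := fun d =>
    (hcof (unop d)).imp (fun n hn => hn.trans (le_max_right s0 (t n)))
  set xv : ∀ d : (lambda.ToType)ᵒᵖ, (F.obj d).X :=
    fun d => fmap F (Nat.find_spec (ex d)) (Y (Nat.find (ex d))).1 with hxv
  have indep : ∀ (d) (k) (h : unop d ≤ r k), fmap F h (Y k).1 = xv d := by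
    intro d k h
    rcases le_total k (Nat.find (ex d)) with hk | hk
    · have e1 : fmap F h (Y k).1
          = fmap F h (fmap F (hrm hk) (Y (Nat.find (ex d))).1) := by rw [hpush k _ hk]
      rw [e1, fmap_comp]
    · have e1 : xv d = fmap F (Nat.find_spec (ex d)) (fmap F (hrm hk) (Y k).1) := by
        rw [hpush _ k hk]
      rw [e1, fmap_comp]
  have hmem : xv ∈ plim F := by
    intro d d' u
    have h1 : unop d' ≤ r (Nat.find (ex d)) :=
      le_trans (leOfHom u.unop) (Nat.find_spec (ex d))
    rw [map_eq_fmap F u]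
    calc fmap F (leOfHom u.unop) (xv d)
        = fmap F (leOfHom u.unop) (fmap F (Nat.find_spec (ex d)) (Y (Nat.find (ex d))).1) := rfl
      _ = fmap F h1 (Y (Nat.find (ex d))).1 := fmap_comp F _ _ _
      _ = xv d' := indep d' _ h1
  refine ⟨⟨xv, hmem⟩, ?_⟩
  show xv (op s0) = y
  rw [← indep (op s0) 0 h0]
  exact chainY_zero F hML r hr1 h0 hy

end Concrete3

section Concrete4

variable {lambda : Ordinal.{u}} (F : (lambda.ToType)ᵒᵖ ⥤ Pointed.{w})
  {A : Type v} [AddCommGroup A]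

open Opposite

/-- Evaluation at a level, as a homomorphism. -/
def evalHom (d : (lambda.ToType)ᵒᵖ) :
    ↥(glim F A) →+ ↥(Smash (F.obj d).X (F.obj d).point A) where
  toFun h := h.1 d
  map_zero' := rfl
  map_add' _ _ := rfl

theorem vanish_of_ker {s r : lambda.ToType} (h : ↥(glim F A))
    (hh : h.1 (op r) = 0) (hs : s ≤ r) : h.1 (op s) = 0 := by
  rw [← glim_push F h hs, hh, map_zero]

/-- The generalized `buildG`: a smash element supported on given threads. -/
noncomputable def buildG' {ι : Type*} (T : Finset ι) (xf : ι → ↥(plim F))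
    (hpt : ∀ i ∈ T, xf i ≠ plimPt F) (c : ι → A) :
    ↥(Smash (↥(plim F)) (plimPt F) A) :=
  ⟨∑ i ∈ T, Finsupp.single (xf i) (c i), by
    rw [mem_smash, Finset.sum_apply']
    exact Finset.sum_eq_zero fun i hi =>
      Finsupp.single_eq_of_ne (fun e => hpt i hi e.symm)⟩

theorem rho_buildG'_coe {ι : Type*} (T : Finset ι) (xf : ι → ↥(plim F))
    (hpt : ∀ i ∈ T, xf i ≠ plimPt F) (c : ι → A) (d : (lambda.ToType)ᵒᵖ) :
    (((rho F A (buildG' F T xf hpt c)).1 d : ↥(Smash (F.obj d).X (F.obj d).point A)) : _ →₀ A)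
      = (∑ i ∈ T, Finsupp.single ((xf i).1 d) (c i)).erase (F.obj d).point := by
  classical
  show ((Finsupp.mapDomain (fun x : ↥(plim F) => x.1 d)
      (∑ i ∈ T, Finsupp.single (xf i) (c i))).erase (F.obj d).point) = _
  congr 1
  rw [← Finsupp.mapDomain.addMonoidHom_apply, map_sum]
  simp only [Finsupp.mapDomain.addMonoidHom_apply, Finsupp.mapDomain_single]

/-- Density of the image of `ρ` along a monotone cofinal chain, with torsion control. -/
theorem dense_chain (hML : MittagLeffler F) (t : ℕ → lambda.ToType)
    (hmono : Monotone t) (hcof : ∀ s, ∃ n, s ≤ t n) (h : ↥(glim F A)) (n : ℕ) :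
    ∃ gg : ↥(Smash (↥(plim F)) (plimPt F) A),
      (h - rho F A gg).1 (op (t n)) = 0 ∧ ∀ q : ℕ, q • h = 0 → q • gg = 0 := by
  classical
  set m := t n with hm
  set hm0 : ↥(Smash (F.obj (op m)).X (F.obj (op m)).point A) := h.1 (op m) with hhm0
  set S : Finset (F.obj (op m)).X := (hm0 : (F.obj (op m)).X →₀ A).support with hS
  set xf : {y // y ∈ S} → ↥(plim F) := fun y =>
    (chainThread F hML t hmono hcof m y.1
      (reach_of_mem_support F h m y.1 y.2)).1 with hxf
  have hxfv : ∀ y : {y // y ∈ S}, (xf y).1 (op m) = y.1 := fun y =>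
    (chainThread F hML t hmono hcof m y.1 (reach_of_mem_support F h m y.1 y.2)).2
  have hpt : ∀ y ∈ S.attach, xf y ≠ plimPt F := by
    intro y _ e
    have h1 : (xf y).1 (op m) = (F.obj (op m)).point := by rw [e]; rfl
    rw [hxfv y] at h1
    have h2 := Finsupp.mem_support_iff.1 y.2
    exact h2 (by rw [h1]; exact hm0.2)
  set c : {y // y ∈ S} → A := fun y => (hm0 : (F.obj (op m)).X →₀ A) y.1 with hc
  refine ⟨buildG' F S.attach xf hpt c, ?_, ?_⟩
  · have e1 : (((rho F A (buildG' F S.attach xf hpt c)).1 (op m) :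
        ↥(Smash (F.obj (op m)).X (F.obj (op m)).point A)) : _ →₀ A) = (hm0 : (F.obj (op m)).X →₀ A) := by
      rw [rho_buildG'_coe]
      have e2 : ∀ y ∈ S.attach, Finsupp.single ((xf y).1 (op m)) (c y)
          = Finsupp.single y.1 ((hm0 : (F.obj (op m)).X →₀ A) y.1) := by
        intro y _; rw [hxfv y, hc]
      rw [Finset.sum_congr rfl e2, Finset.sum_attach S
        (fun y => Finsupp.single y ((hm0 : (F.obj (op m)).X →₀ A) y))]
      have e3 : ∑ y ∈ S, Finsupp.single y ((hm0 : (F.obj (op m)).X →₀ A) y)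
          = (hm0 : (F.obj (op m)).X →₀ A) := Finsupp.sum_single _
      rw [e3]
      exact erase_eq_self hm0.2
    have e4 : (rho F A (buildG' F S.attach xf hpt c)).1 (op m) = h.1 (op m) :=
      Subtype.ext (by rw [e1])
    calc (h - rho F A (buildG' F S.attach xf hpt c)).1 (op m)
        = h.1 (op m) - (rho F A (buildG' F S.attach xf hpt c)).1 (op m) := rfl
      _ = 0 := by rw [e4, sub_self]
  · intro q hq
    apply Subtype.ext
    show q • ∑ y ∈ S.attach, Finsupp.single (xf y) (c y) = 0
    rw [Finset.smul_sum]
    apply Finset.sum_eq_zero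
    intro y _
    rw [Finsupp.smul_single]
    have hq0 : q • (hm0 : (F.obj (op m)).X →₀ A) = 0 := by
      have h4 : (q • h).1 (op m) = 0 := by rw [hq]; rfl
      have e : q • hm0 = 0 := h4
      calc q • (hm0 : (F.obj (op m)).X →₀ A)
          = ((q • hm0 : ↥(Smash _ _ A)) : _ →₀ A) := rfl
        _ = 0 := by rw [e]; rfl
    have : q • c y = 0 := by
      have := congrArg (fun f : _ →₀ A => f y.1) hq0
      simpa [hc] using this
    rw [this, Finsupp.single_zero]

end Concrete4

section Concrete5

variable {lambda : Ordinal.{u}} (F : (lambda.ToType)ᵒᵖ ⥤ Pointed.{w})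
  {A : Type v} [AddCommGroup A]

open Opposite

/-- The filtration subgroups given by vanishing at a chain level. -/
noncomputable def chainW (t : ℕ → lambda.ToType) (n : ℕ) : AddSubgroup ↥(glim F A) :=
  (evalHom F (op (t n))).ker

theorem chainW_mem {t : ℕ → lambda.ToType} {n : ℕ} {h : ↥(glim F A)} :
    h ∈ chainW F t n ↔ h.1 (op (t n)) = 0 := Iff.rfl

theorem chainW_vanish {t : ℕ → lambda.ToType} {n : ℕ} {h : ↥(glim F A)}
    (hh : h ∈ chainW F t n) {s : lambda.ToType} (hs : s ≤ t n) :
    h.1 (op s) = 0 :=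
  vanish_of_ker F h (chainW_mem F |>.1 hh) hs

theorem term_vanish (t : ℕ → lambda.ToType) (hmono : Monotone t)
    (hcof : ∀ s, ∃ n, s ≤ t n) {ε : ℕ → ↥(glim F A)} (hε : ∀ N, ε N ∈ chainW F t N)
    (d : (lambda.ToType)ᵒᵖ) (N : ℕ) (hN : Nat.find (hcof (unop d)) ≤ N) :
    (ε N).1 d = 0 := by
  have h1 : unop d ≤ t N := le_trans (Nat.find_spec (hcof (unop d))) (hmono hN)
  exact chainW_vanish F (hε N) h1

theorem sum_stable (t : ℕ → lambda.ToType) (hmono : Monotone t)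
    (hcof : ∀ s, ∃ n, s ≤ t n) {ε : ℕ → ↥(glim F A)} (hε : ∀ N, ε N ∈ chainW F t N)
    (d : (lambda.ToType)ᵒᵖ) (K : ℕ) (hK : Nat.find (hcof (unop d)) ≤ K) :
    ∑ N ∈ Finset.range K, (ε N).1 d
      = ∑ N ∈ Finset.range (Nat.find (hcof (unop d))), (ε N).1 d := by
  refine (Finset.sum_subset (Finset.range_subset_range.2 hK) ?_).symm
  intro x _ hx
  exact term_vanish F t hmono hcof hε d x (by simpa using hx)

/-- Summation of a sequence tending to zero along the filtration. -/
noncomputable def chainSum (t : ℕ → lambda.ToType) (hmono : Monotone t)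
    (hcof : ∀ s, ∃ n, s ≤ t n) (ε : ℕ → ↥(glim F A)) : ↥(glim F A) :=
  letI := Classical.dec (∀ N, ε N ∈ chainW F t N)
  if hε : ∀ N, ε N ∈ chainW F t N then
    ⟨fun d => ∑ N ∈ Finset.range (Nat.find (hcof (unop d))), (ε N).1 d, by
      intro d d' u
      rw [map_sum]
      have e1 : ∀ N ∈ Finset.range (Nat.find (hcof (unop d))),
          smashMap (F.obj d).point (F.obj d').point (F.map u).toFun A ((ε N).1 d)
            = (ε N).1 d' := fun N _ => (ε N).2 u
      rw [Finset.sum_congr rfl e1]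
      have h2 : Nat.find (hcof (unop d')) ≤ Nat.find (hcof (unop d)) :=
        Nat.find_min' _ (le_trans (leOfHom u.unop) (Nat.find_spec (hcof (unop d))))
      exact sum_stable F t hmono hcof hε d' _ h2⟩
  else 0

theorem chainSum_coe (t : ℕ → lambda.ToType) (hmono : Monotone t)
    (hcof : ∀ s, ∃ n, s ≤ t n) {ε : ℕ → ↥(glim F A)} (hε : ∀ N, ε N ∈ chainW F t N)
    (d : (lambda.ToType)ᵒᵖ) :
    (chainSum F t hmono hcof ε).1 d
      = ∑ N ∈ Finset.range (Nat.find (hcof (unop d))), (ε N).1 d := by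
  rw [chainSum, dif_pos hε]

/-- The interface package in the case of a countable cofinal chain. -/
noncomputable def packChain (t : ℕ → lambda.ToType) (hmono : Monotone t)
    (hcof : ∀ s, ∃ n, s ≤ t n) (hML : MittagLeffler F) :
    Pack ((rho F A).range) where
  W := chainW F t
  Sum := chainSum F t hmono hcof
  hW := by
    intro n m hnm h hh
    exact (chainW_mem F).2 (chainW_vanish F hh (hmono hnm))
  hSum1 := by
    intro ε hε
    have hε' : ∀ N, ε (N+1) ∈ chainW F t N := fun N =>
      (chainW_mem F).2 (chainW_vanish F (hε (N+1)) (hmono (Nat.le_succ N)))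
    apply Subtype.ext
    funext d
    have lhs1 : (chainSum F t hmono hcof ε).1 d
        = ∑ N ∈ Finset.range (Nat.find (hcof (unop d)) + 1), (ε N).1 d := by
      rw [chainSum_coe F t hmono hcof hε d]
      exact (sum_stable F t hmono hcof hε d _ (Nat.le_succ _)).symm
    have rhs1 : (ε 0 + chainSum F t hmono hcof (fun N => ε (N+1))).1 d
        = (ε 0).1 d + ∑ N ∈ Finset.range (Nat.find (hcof (unop d))), (ε (N+1)).1 d := by
      have : (chainSum F t hmono hcof (fun N => ε (N+1))).1 d
          = ∑ N ∈ Finset.range (Nat.find (hcof (unop d))), (ε (N+1)).1 d :=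
        chainSum_coe F t hmono hcof hε' d
      calc (ε 0 + chainSum F t hmono hcof (fun N => ε (N+1))).1 d
          = (ε 0).1 d + (chainSum F t hmono hcof (fun N => ε (N+1))).1 d := rfl
        _ = _ := by rw [this]
    show (chainSum F t hmono hcof ε).1 d
        = (ε 0 + chainSum F t hmono hcof (fun N => ε (N+1))).1 d
    rw [lhs1, rhs1, Finset.sum_range_succ']
    rw [add_comm]
  hSum2 := by
    intro m ε hε
    have hε' : ∀ N, m • ε N ∈ chainW F t N := fun N =>
      AddSubgroup.nsmul_mem _ (hε N) m
    apply Subtype.ext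
    funext d
    show (chainSum F t hmono hcof (fun N => m • ε N)).1 d
        = (m • chainSum F t hmono hcof ε).1 d
    rw [chainSum_coe F t hmono hcof hε' d]
    have e1 : ∀ N ∈ Finset.range (Nat.find (hcof (unop d))),
        ((m • ε N : ↥(glim F A))).1 d = m • ((ε N).1 d) := fun N _ => rfl
    rw [Finset.sum_congr rfl e1, ← Finset.smul_sum]
    calc m • ∑ N ∈ Finset.range (Nat.find (hcof (unop d))), (ε N).1 d
        = m • (chainSum F t hmono hcof ε).1 d := by
          rw [chainSum_coe F t hmono hcof hε d]
      _ = (m • chainSum F t hmono hcof ε).1 d := rfl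
  hDense := by
    intro h n
    obtain ⟨gg, hgg, _⟩ := dense_chain F hML t hmono hcof h n
    refine ⟨rho F A gg, AddMonoidHom.mem_range.2 ⟨gg, rfl⟩, ?_⟩
    exact (chainW_mem F).2 hgg
  hTD := by
    intro h n q hq
    obtain ⟨gg, hgg, htor⟩ := dense_chain F hML t hmono hcof h n
    refine ⟨rho F A gg, AddMonoidHom.mem_range.2 ⟨gg, rfl⟩, ?_, (chainW_mem F).2 hgg⟩
    rw [← map_nsmul, htor q hq, map_zero]
  hPure := purity F

end Concrete5

section Concrete6

variable {lambda : Ordinal.{u}} (F : (lambda.ToType)ᵒᵖ ⥤ Pointed.{w})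
  {A : Type v} [AddCommGroup A]

open Opposite

open Classical in
theorem supp_sub (h : ↥(glim F A)) {s s' : lambda.ToType} (hs : s ≤ s') :
    ((h.1 (op s) : ↥(Smash _ _ A)) : _ →₀ A).support
      ⊆ ((h.1 (op s') : ↥(Smash _ _ A)) : _ →₀ A).support.image (fmap F hs) := by
  classical
  intro y hy
  have hyne := Finsupp.mem_support_iff.1 hy
  have hypt : y ≠ (F.obj (op s)).point := by
    intro e; exact hyne (e ▸ (h.1 (op s)).2)
  rw [← glim_push F h hs] at hyne
  have h2 : ((Finsupp.mapDomain (fmap F hs)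
      ((h.1 (op s') : ↥(Smash _ _ A)) : _ →₀ A)).erase (F.obj (op s)).point) y ≠ 0 := hyne
  rw [Finsupp.erase_ne hypt] at h2
  obtain ⟨w, hw1, hw2⟩ := mapDomain_ne_zero (A := A) h2
  exact Finset.mem_image.2 ⟨w, hw1, hw2⟩

/-- In the absence of a countable cofinal chain, `ρ` is surjective. -/
theorem rho_surj (hnc : ¬∃ t : ℕ → lambda.ToType, Monotone t ∧ ∀ s, ∃ n, s ≤ t n)
    (h : ↥(glim F A)) : ∃ gg, rho F A gg = h := by
  classical
  rcases isEmpty_or_nonempty lambda.ToType with hE | hNE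
  · refine ⟨0, ?_⟩
    rw [map_zero]
    apply Subtype.ext
    funext d
    exact (hE.elim (unop d))
  · -- every countable family is bounded
    have hbd : ∀ c : ℕ → lambda.ToType, ∃ u, ∀ n, c n ≤ u := by
      intro c
      by_contra hc
      push_neg at hc
      apply hnc
      refine ⟨fun n => (Finset.range (n+1)).sup' ⟨0, by simp⟩ c, ?_, ?_⟩
      · intro n m hnm
        apply Finset.sup'_le
        intro i hi
        have hii := Finset.mem_range.1 hi
        exact Finset.le_sup' c (Finset.mem_range.2 (by omega))
      · intro s
        obtain ⟨n, hn⟩ := hc s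
        exact ⟨n, le_trans (le_of_lt hn)
          (Finset.le_sup' c (Finset.mem_range.2 (Nat.lt_succ_self n)))⟩
    set f : lambda.ToType → ℕ :=
      fun s => ((h.1 (op s) : ↥(Smash (F.obj (op s)).X (F.obj (op s)).point A))
        : (F.obj (op s)).X →₀ A).support.card with hf
    have fmono : ∀ {s s' : lambda.ToType}, s ≤ s' → f s ≤ f s' := by
      intro s s' hs
      exact le_trans (Finset.card_le_card (supp_sub F h hs)) Finset.card_image_le
    have fbdd : ∃ B, ∀ s, f s ≤ B := by
      by_contra hB
      push_neg at hB
      have hex : ∀ n : ℕ, ∃ s, n < f s := hB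
      choose cs hcs using hex
      obtain ⟨u, hu⟩ := hbd cs
      have : ∀ n, n < f u := fun n => lt_of_lt_of_le (hcs n) (fmono (hu n))
      exact lt_irrefl _ (this (f u))
    obtain ⟨B, hBb⟩ := fbdd
    have hbdd : BddAbove (Set.range f) := ⟨B, by rintro _ ⟨s, rfl⟩; exact hBb s⟩
    have hne : (Set.range f).Nonempty := ⟨f (Classical.arbitrary _), ⟨_, rfl⟩⟩
    obtain ⟨s₀, hs₀⟩ := Nat.sSup_mem hne hbdd
    set S0 := ((h.1 (op s₀) : ↥(Smash (F.obj (op s₀)).X (F.obj (op s₀)).point A))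
      : (F.obj (op s₀)).X →₀ A).support with hS0
    have hleM : ∀ s, f s ≤ sSup (Set.range f) := fun s => le_csSup hbdd ⟨s, rfl⟩
    have hconst : ∀ {s : lambda.ToType}, s₀ ≤ s → f s = f s₀ := by
      intro s hs
      refine le_antisymm (hs₀ ▸ hleM s) (fmono hs)
    -- the image and injectivity lemmas
    have himg : ∀ {s s' : lambda.ToType} (h1 : s₀ ≤ s) (h2 : s ≤ s'),
        ((h.1 (op s') : ↥(Smash _ _ A)) : _ →₀ A).support.image (fmap F h2)
          = ((h.1 (op s) : ↥(Smash _ _ A)) : _ →₀ A).support := by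
      intro s s' h1 h2
      refine (Finset.eq_of_subset_of_card_le (supp_sub F h h2) ?_).symm
      refine le_trans Finset.card_image_le ?_
      show f s' ≤ f s
      rw [hconst h1, hconst (h1.trans h2)]
    have hinj : ∀ {s s' : lambda.ToType} (h1 : s₀ ≤ s) (h2 : s ≤ s'),
        Set.InjOn (fmap F h2)
          (((h.1 (op s') : ↥(Smash (F.obj (op s')).X (F.obj (op s')).point A))
            : (F.obj (op s')).X →₀ A).support : Set (F.obj (op s')).X) := by
      intro s s' h1 h2
      rw [← Finset.card_image_iff]
      rw [himg h1 h2]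
      show f s = f s'
      rw [hconst h1, hconst (h1.trans h2)]
    have hcoef : ∀ {s s' : lambda.ToType} (h1 : s₀ ≤ s) (h2 : s ≤ s') {x}
        (hx : x ∈ ((h.1 (op s') : ↥(Smash _ _ A)) : _ →₀ A).support),
        ((h.1 (op s) : ↥(Smash _ _ A)) : _ →₀ A) (fmap F h2 x)
          = ((h.1 (op s') : ↥(Smash _ _ A)) : _ →₀ A) x := by
      intro s s' h1 h2 x hx
      have hfx : fmap F h2 x ∈ ((h.1 (op s) : ↥(Smash _ _ A)) : _ →₀ A).support := by
        rw [← himg h1 h2]; exact Finset.mem_image_of_mem _ hx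
      have hfxpt : fmap F h2 x ≠ (F.obj (op s)).point := by
        intro e
        apply Finsupp.mem_support_iff.1 hfx
        rw [e]
        exact (h.1 (op s)).2
      calc ((h.1 (op s) : ↥(Smash _ _ A)) : _ →₀ A) (fmap F h2 x)
          = ((Finsupp.mapDomain (fmap F h2)
              ((h.1 (op s') : ↥(Smash _ _ A)) : _ →₀ A)).erase (F.obj (op s)).point)
              (fmap F h2 x) := by rw [← glim_push F h h2]; rfl
        _ = Finsupp.mapDomain (fmap F h2)
              ((h.1 (op s') : ↥(Smash _ _ A)) : _ →₀ A) (fmap F h2 x) := by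
            rw [Finsupp.erase_ne hfxpt]
        _ = _ := mapDomain_apply_injOn _ (hinj h1 h2) hx
    -- selection of preimages in supports
    have hex : ∀ (s : lambda.ToType) (hs : s₀ ≤ s) (y : (F.obj (op s₀)).X)
        (hy : y ∈ S0),
        ∃ x, x ∈ ((h.1 (op s) : ↥(Smash _ _ A)) : _ →₀ A).support ∧ fmap F hs x = y := by
      intro s hs y hy
      rw [hS0, ← himg (le_refl s₀) hs] at hy
      obtain ⟨x, hx1, hx2⟩ := Finset.mem_image.1 hy
      exact ⟨x, hx1, hx2⟩
    choose XS hXS1 hXS2 using hex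
    have Xcompat : ∀ (s s' : lambda.ToType) (hs : s₀ ≤ s) (hss' : s ≤ s') (y)
        (hy : y ∈ S0),
        fmap F hss' (XS s' (hs.trans hss') y hy) = XS s hs y hy := by
      intro s s' hs hss' y hy
      have m1 : fmap F hss' (XS s' (hs.trans hss') y hy)
          ∈ ((h.1 (op s) : ↥(Smash _ _ A)) : _ →₀ A).support := by
        rw [← himg hs hss']
        exact Finset.mem_image_of_mem _ (hXS1 s' (hs.trans hss') y hy)
      apply hinj (le_refl s₀) hs m1 (hXS1 s hs y hy)
      show fmap F hs (fmap F hss' _) = fmap F hs (XS s hs y hy)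
      rw [fmap_comp, hXS2, hXS2]
    have X0 : ∀ (y) (hy : y ∈ S0), XS s₀ (le_refl s₀) y hy = y := by
      intro y hy
      have h5 := hXS2 s₀ (le_refl s₀) y hy
      rw [fmap_id] at h5
      exact h5
    -- threads
    have threx : ∀ (y) (hy : y ∈ S0),
        ∃ x : ↥(plim F), ∀ (s) (hs : s₀ ≤ s), x.1 (op s) = XS s hs y hy := by
      intro y hy
      set xv : ∀ d : (lambda.ToType)ᵒᵖ, (F.obj d).X :=
        fun d => fmap F (le_max_left (unop d) s₀)
          (XS (max (unop d) s₀) (le_max_right _ _) y hy) with hxv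
      have indep : ∀ (d) (s) (h1 : unop d ≤ s) (h2 : s₀ ≤ s),
          fmap F h1 (XS s h2 y hy) = xv d := by
        intro d s h1 h2
        set w := max s (max (unop d) s₀) with hw
        have e1 : fmap F h1 (XS s h2 y hy)
            = fmap F h1 (fmap F (le_max_left s _) (XS w (h2.trans (le_max_left s _)) y hy)) := by
          rw [Xcompat s w h2 (le_max_left s _) y hy]
        have e2 : xv d = fmap F (le_max_left (unop d) s₀)
            (fmap F (le_max_right s _)
              (XS w ((le_max_right _ _).trans (le_max_right s _)) y hy)) := by
          rw [hxv]
          rw [Xcompat (max (unop d) s₀) w (le_max_right _ _) (le_max_right s _) y hy]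
        rw [e1, e2, fmap_comp, fmap_comp]
      refine ⟨⟨xv, ?_⟩, ?_⟩
      · intro d d' uu
        rw [map_eq_fmap F uu]
        have h1 : unop d' ≤ max (unop d) s₀ :=
          le_trans (leOfHom uu.unop) (le_max_left _ _)
        calc fmap F (leOfHom uu.unop) (xv d)
            = fmap F (leOfHom uu.unop) (fmap F (le_max_left (unop d) s₀)
                (XS (max (unop d) s₀) (le_max_right _ _) y hy)) := rfl
          _ = fmap F h1 (XS (max (unop d) s₀) (le_max_right _ _) y hy) := fmap_comp F _ _ _
          _ = xv d' := indep d' _ h1 (le_max_right _ _)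
      · intro s hs
        show xv (op s) = XS s hs y hy
        rw [← indep (op s) s (le_refl s) hs, fmap_id]
    choose thr hthr using threx
    -- the preimage element
    have hpt : ∀ y ∈ S0.attach, thr y.1 y.2 ≠ plimPt F := by
      intro y _ e
      have h1 : (thr y.1 y.2).1 (op s₀) = (F.obj (op s₀)).point := by rw [e]; rfl
      rw [hthr y.1 y.2 s₀ (le_refl s₀), X0 y.1 y.2] at h1
      exact (Finsupp.mem_support_iff.1 y.2) (by rw [h1]; exact (h.1 (op s₀)).2)
    set c : {y // y ∈ S0} → A :=
      fun y => ((h.1 (op s₀) : ↥(Smash (F.obj (op s₀)).X (F.obj (op s₀)).point A))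
        : (F.obj (op s₀)).X →₀ A) y.1 with hc
    refine ⟨buildG' F S0.attach (fun y => thr y.1 y.2) hpt c, ?_⟩
    set gg := buildG' F S0.attach (fun y => thr y.1 y.2) hpt c with hgg
    -- equality at levels above s₀
    have hlev : ∀ (s) (hs : s₀ ≤ s), (rho F A gg).1 (op s) = h.1 (op s) := by
      intro s hs
      apply Subtype.ext
      rw [hgg, rho_buildG'_coe]
      have e2 : ∀ y ∈ S0.attach,
          Finsupp.single ((thr y.1 y.2).1 (op s)) (c y)
            = Finsupp.single (XS s hs y.1 y.2)
                (((h.1 (op s) : ↥(Smash _ _ A)) : _ →₀ A) (XS s hs y.1 y.2)) := by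
        intro y _
        rw [hthr y.1 y.2 s hs]
        congr 1
        rw [hc]
        calc ((h.1 (op s₀) : ↥(Smash _ _ A)) : _ →₀ A) y.1
            = ((h.1 (op s₀) : ↥(Smash _ _ A)) : _ →₀ A) (fmap F hs (XS s hs y.1 y.2)) := by
              rw [hXS2 s hs y.1 y.2]
          _ = _ := hcoef (le_refl s₀) hs (hXS1 s hs y.1 y.2)
      rw [Finset.sum_congr rfl e2]
      have e3 : ∑ y ∈ S0.attach, Finsupp.single (XS s hs y.1 y.2)
            (((h.1 (op s) : ↥(Smash _ _ A)) : _ →₀ A) (XS s hs y.1 y.2))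
          = ∑ x ∈ ((h.1 (op s) : ↥(Smash (F.obj (op s)).X (F.obj (op s)).point A))
              : (F.obj (op s)).X →₀ A).support.attach,
              Finsupp.single x.1 (((h.1 (op s) : ↥(Smash _ _ A)) : _ →₀ A) x.1) := by
        refine Finset.sum_nbij' (fun y => ⟨XS s hs y.1 y.2, hXS1 s hs y.1 y.2⟩)
          (fun x => ⟨fmap F hs x.1,
            by rw [hS0, ← himg (le_refl s₀) hs]; exact Finset.mem_image_of_mem _ x.2⟩)
          ?_ ?_ ?_ ?_ ?_
        · intro a _; exact Finset.mem_attach _ _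
        · intro a _; exact Finset.mem_attach _ _
        · intro a _
          apply Subtype.ext
          show fmap F hs (XS s hs a.1 a.2) = a.1
          exact hXS2 s hs a.1 a.2
        · intro a _
          apply Subtype.ext
          show XS s hs (fmap F hs a.1) _ = a.1
          have m1 : fmap F hs a.1 ∈ S0 := by
            rw [hS0, ← himg (le_refl s₀) hs]
            exact Finset.mem_image_of_mem _ a.2
          apply hinj (le_refl s₀) hs (hXS1 s hs (fmap F hs a.1) m1) a.2
          show fmap F hs (XS s hs _ _) = fmap F hs a.1
          rw [hXS2]
        · intro a _; rfl
      rw [e3, Finset.sum_attach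
        (((h.1 (op s) : ↥(Smash (F.obj (op s)).X (F.obj (op s)).point A))
          : (F.obj (op s)).X →₀ A).support)
        (fun x => Finsupp.single x
          (((h.1 (op s) : ↥(Smash (F.obj (op s)).X (F.obj (op s)).point A))
            : (F.obj (op s)).X →₀ A) x))]
      have e4 : ∑ x ∈ ((h.1 (op s) : ↥(Smash (F.obj (op s)).X (F.obj (op s)).point A))
            : (F.obj (op s)).X →₀ A).support,
          Finsupp.single x (((h.1 (op s) : ↥(Smash (F.obj (op s)).X (F.obj (op s)).point A))
            : (F.obj (op s)).X →₀ A) x)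
          = ((h.1 (op s) : ↥(Smash (F.obj (op s)).X (F.obj (op s)).point A))
            : (F.obj (op s)).X →₀ A) := Finsupp.sum_single _
      rw [e4]
      exact erase_eq_self (h.1 (op s)).2
    -- conclude componentwise
    apply Subtype.ext
    funext d
    have h1 : unop d ≤ max (unop d) s₀ := le_max_left _ _
    calc (rho F A gg).1 d
        = pushf F h1 ((rho F A gg).1 (op (max (unop d) s₀))) := (glim_push F _ h1).symm
      _ = pushf F h1 (h.1 (op (max (unop d) s₀))) := by rw [hlev _ (le_max_right _ _)]
      _ = h.1 d := glim_push F h h1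

/-- The interface package in the absence of a countable cofinal chain. -/
noncomputable def packNoChain
    (hnc : ¬∃ t : ℕ → lambda.ToType, Monotone t ∧ ∀ s, ∃ n, s ≤ t n) :
    Pack ((rho F A).range) where
  W := fun _ => ⊥
  Sum := fun _ => 0
  hW := fun {_ _} _ => le_rfl
  hSum1 := by
    intro ε hε
    have h0 : ε 0 = 0 := (AddSubgroup.mem_bot).1 (hε 0)
    rw [h0, add_zero]
  hSum2 := fun m ε _ => (smul_zero m).symm
  hDense := by
    intro h n
    obtain ⟨gg, hgg⟩ := rho_surj F hnc h
    refine ⟨rho F A gg, AddMonoidHom.mem_range.2 ⟨gg, rfl⟩, ?_⟩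
    rw [AddSubgroup.mem_bot, hgg, sub_self]
  hTD := by
    intro h n q hq
    obtain ⟨gg, hgg⟩ := rho_surj F hnc h
    refine ⟨rho F A gg, AddMonoidHom.mem_range.2 ⟨gg, rfl⟩, by rw [hgg]; exact hq, ?_⟩
    rw [AddSubgroup.mem_bot, hgg, sub_self]
  hPure := purity F

end Concrete6

/-- Let `A` be an abelian group, `λ` an ordinal regarded as a directed poset and
`F : λᵒᵖ ⥤ Set_*` a diagram of pointed sets satisfying the Mittag-Leffler condition.
Then the cokernel `H(X,A)` of the natural map `ρ` is algebraically compact;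
explicitly, `H(X,A)` is cotorsion and, for every prime `p`, the subgroup
`⋂_{n} pⁿ·H(X,A)` is `p`-divisible. -/
theorem stmt17 (lambda : Ordinal.{u}) (F : (lambda.ToType)ᵒᵖ ⥤ Pointed.{w})
    {A : Type*} [AddCommGroup A] (hML : MittagLeffler F) :
    Cotorsion (↥(glim F A) ⧸ (rho F A).range) ∧
      ∀ p : ℕ, p.Prime →
        (fun y : ↥(glim F A) ⧸ (rho F A).range => p • y) ''
            (⋂ n : ℕ, Set.range fun y : ↥(glim F A) ⧸ (rho F A).range => p ^ n • y)
          = ⋂ n : ℕ, Set.range fun y : ↥(glim F A) ⧸ (rho F A).range => p ^ n • y := by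
  classical
  by_cases hch : ∃ t : ℕ → lambda.ToType, Monotone t ∧ ∀ s, ∃ n, s ≤ t n
  · have P := packChain (A := A) F hch.choose hch.choose_spec.1 hch.choose_spec.2 hML
    exact ⟨P.cotorsion, fun p _ => P.pdiv p⟩
  · have P := packNoChain (A := A) F hch
    exact ⟨P.cotorsion, fun p _ => P.pdiv p⟩
end
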